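/- arXiv:1509.04248 — 4 statements merged into one kernel-verified Lean document; each statement's English description precedes it below -/
import Mathlib

section
/- Let U = 1 + Σ_{i≥1} a_i T^i ∈ C[[T]] be a formal power series with all coefficients a_i ∈ R, and let s be a nonnegative integer. Then the set of tuples (b_1, …, b_s) ∈ C^s such that the coefficient of T^{ip} in U − (1 + Σ_{i=1}^s b_i T^i)^p vanishes for every i = 1, …, s is nonempty and finite; indeed it has at most p^s elements. -/
noncomputable section StmtAux
namespace Stmt4Aux



variable (C : Type) [Field C] (p : ℕ)

/-- The universal series `1 + Σ_{j=1}^n X_j T^j` over the polynomial ring. -/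
def W (n : ℕ) : PowerSeries (MvPolynomial (Fin n) C) :=
  1 + ∑ j : Fin n, PowerSeries.monomial (R := _) ((j : ℕ) + 1) (MvPolynomial.X j)

/-- The universal coefficient polynomials `E_i := coeff_{i p} (W^p)`, `i = j+1`. -/
def E (n : ℕ) (j : Fin n) : MvPolynomial (Fin n) C :=
  PowerSeries.coeff (R := _) (((j : ℕ) + 1) * p) (W C n ^ p)

variable {C}

lemma coeff_sum_monomial {n k : ℕ} {R : Type*} [CommRing R] (f : Fin n → R) :
    PowerSeries.coeff (R := R) k (∑ j : Fin n, PowerSeries.monomial (R := R) ((j : ℕ) + 1) (f j)) =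
      if h : 1 ≤ k ∧ k ≤ n then f ⟨k - 1, by omega⟩ else 0 := by
  rw [map_sum]
  split_ifs with h
  · rw [Finset.sum_eq_single (⟨k - 1, by omega⟩ : Fin n)]
    · rw [PowerSeries.coeff_monomial]
      simp only [if_pos (by omega : k = (k-1) + 1)]
    · intro j _ hj
      rw [PowerSeries.coeff_monomial, if_neg]
      intro hk
      refine hj (Fin.ext ?_)
      simp only [Fin.val_mk]
      omega
    · simp
  · apply Finset.sum_eq_zero
    intro j _
    rw [PowerSeries.coeff_monomial, if_neg]
    intro hk
    exact h ⟨by omega, by omega⟩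

lemma coeff_W {n k : ℕ} :
    PowerSeries.coeff (R := _) k (W C n) =
      if h : 1 ≤ k ∧ k ≤ n then MvPolynomial.X ⟨k - 1, by omega⟩ else
        if k = 0 then 1 else 0 := by
  rw [W, map_add, coeff_sum_monomial, PowerSeries.coeff_one]
  split_ifs with h0 h h
  · omega
  · rw [add_zero]
  · rw [zero_add]
  · rw [zero_add]



variable {n : ℕ}

/-- weight -/
def wt (e : Fin n →₀ ℕ) : ℕ := ∑ j : Fin n, ((j : ℕ) + 1) * e j
/-- total degree -/
def dg (e : Fin n →₀ ℕ) : ℕ := ∑ j : Fin n, e j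
/-- quadratic weight -/
def qd (e : Fin n →₀ ℕ) : ℕ := ∑ j : Fin n, ((j : ℕ) + 1) ^ 2 * e j

lemma wt_add (a b : Fin n →₀ ℕ) : wt (a + b) = wt a + wt b := by
  simp [wt, mul_add, Finset.sum_add_distrib]
lemma dg_add (a b : Fin n →₀ ℕ) : dg (a + b) = dg a + dg b := by
  simp [dg, Finset.sum_add_distrib]
lemma qd_add (a b : Fin n →₀ ℕ) : qd (a + b) = qd a + qd b := by
  simp [qd, mul_add, Finset.sum_add_distrib]

lemma wt_single (i : Fin n) (m : ℕ) : wt (Finsupp.single i m) = ((i : ℕ) + 1) * m := by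
  rw [wt, Finset.sum_eq_single i]
  · simp
  · intro j _ hj; rw [Finsupp.single_eq_of_ne' (Ne.symm hj), mul_zero]
  · simp
lemma dg_single (i : Fin n) (m : ℕ) : dg (Finsupp.single i m) = m := by
  rw [dg, Finset.sum_eq_single i]
  · simp
  · intro j _ hj; exact Finsupp.single_eq_of_ne' (Ne.symm hj)
  · simp
lemma qd_single (i : Fin n) (m : ℕ) : qd (Finsupp.single i m) = ((i : ℕ) + 1) ^ 2 * m := by
  rw [qd, Finset.sum_eq_single i]
  · simp
  · intro j _ hj; rw [Finsupp.single_eq_of_ne' (Ne.symm hj), mul_zero]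
  · simp

lemma qd_le (e : Fin n →₀ ℕ) : qd e ≤ n * wt e := by
  rw [qd, wt, Finset.mul_sum]
  apply Finset.sum_le_sum
  intro j _
  have : (j : ℕ) + 1 ≤ n := j.2
  calc ((j : ℕ) + 1) ^ 2 * e j = (((j:ℕ)+1) * (((j:ℕ)+1) * e j)) := by ring
  _ ≤ n * (((j:ℕ)+1) * e j) := Nat.mul_le_mul_right _ this

variable {C : Type} [Field C] {p n : ℕ}

lemma wt_zero : wt (0 : Fin n →₀ ℕ) = 0 := by simp [wt]
lemma dg_zero : dg (0 : Fin n →₀ ℕ) = 0 := by simp [dg]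

lemma supp_W {k : ℕ} {g : Fin n →₀ ℕ}
    (hg : g ∈ (PowerSeries.coeff (R := _) k (W C n)).support) : wt g = k ∧ dg g ≤ 1 := by
  rw [MvPolynomial.mem_support_iff, coeff_W] at hg
  split_ifs at hg with h h0
  · have hx := hg
    rw [MvPolynomial.coeff_X'] at hx
    have : Finsupp.single (⟨k - 1, by omega⟩ : Fin n) 1 = g := by
      by_contra hne; rw [if_neg hne] at hx; exact hx rfl
    rw [← this]
    constructor
    · rw [wt_single]; simp; omega
    · rw [dg_single]
  · have hx := hg
    rw [MvPolynomial.coeff_one] at hx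
    have : g = 0 := by
      by_contra hne; rw [if_neg (fun h : (0 : Fin n →₀ ℕ) = g => hne h.symm)] at hx; exact hx rfl
    rw [this, wt_zero, dg_zero]
    exact ⟨h0.symm, by omega⟩
  · simp at hg

lemma supp_W_pow {m : ℕ} : ∀ {k : ℕ} {g : Fin n →₀ ℕ},
    g ∈ (PowerSeries.coeff (R := _) k ((W C n) ^ m)).support → wt g = k ∧ dg g ≤ m := by
  induction m with
  | zero =>
    intro k g hg
    rw [pow_zero, MvPolynomial.mem_support_iff, PowerSeries.coeff_one] at hg
    split_ifs at hg with h
    · have : g = 0 := by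
        by_contra hne
        rw [MvPolynomial.coeff_one] at hg
        split_ifs at hg with h2
        · exact hne h2.symm
        · exact hg rfl
      rw [this, wt_zero, dg_zero]; exact ⟨h.symm, le_refl _⟩
    · simp at hg
  | succ m ih =>
    intro k g hg
    rw [pow_succ, MvPolynomial.mem_support_iff, PowerSeries.coeff_mul,
      MvPolynomial.coeff_sum] at hg
    obtain ⟨ab, hab, hne⟩ := Finset.exists_ne_zero_of_sum_ne_zero hg
    rw [Finset.HasAntidiagonal.mem_antidiagonal] at hab
    have hmem : g ∈ ((PowerSeries.coeff (R := _) ab.1 ((W C n) ^ m)) *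
        (PowerSeries.coeff (R := _) ab.2 (W C n))).support := MvPolynomial.mem_support_iff.2 hne
    have hsub := MvPolynomial.support_mul _ _ hmem
    rw [Finset.mem_add] at hsub
    obtain ⟨g₁, hg₁, g₂, hg₂, hgsum⟩ := hsub
    obtain ⟨hw₁, hd₁⟩ := ih hg₁
    obtain ⟨hw₂, hd₂⟩ := supp_W hg₂
    subst hgsum
    rw [wt_add, dg_add]
    exact ⟨by omega, by omega⟩


/-- coefficient of `1 + monomial d x` -/
lemma coeff_one_add_monomial {R : Type*} [CommRing R] {d : ℕ} (hd : 1 ≤ d) (x : R) (b : ℕ) :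
    PowerSeries.coeff (R := R) b (1 + PowerSeries.monomial (R := R) d x) =
      if b = 0 then 1 else if b = d then x else 0 := by
  rw [map_add, PowerSeries.coeff_one, PowerSeries.coeff_monomial]
  split_ifs with h1 h2 h2 <;> first | omega | ring

lemma coeff_one_add_monomial_pow_high {R : Type*} [CommRing R] {d : ℕ} (hd : 1 ≤ d) (x : R) :
    ∀ (m k : ℕ), d * m < k → PowerSeries.coeff (R := R) k ((1 + PowerSeries.monomial (R := R) d x) ^ m) = 0 := by
  intro m
  induction m with
  | zero =>
    intro k hk
    rw [pow_zero, PowerSeries.coeff_one, if_neg (by omega)]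
  | succ m ih =>
    intro k hk
    have hdd : d * (m + 1) = d * m + d := by ring
    rw [pow_succ, PowerSeries.coeff_mul]
    apply Finset.sum_eq_zero
    intro ab hab
    rw [Finset.HasAntidiagonal.mem_antidiagonal] at hab
    rw [coeff_one_add_monomial hd]
    split_ifs with h1 h2
    · rw [ih ab.1 (by omega), zero_mul]
    · rw [ih ab.1 (by omega), zero_mul]
    · rw [mul_zero]

lemma coeff_one_add_monomial_pow_top {R : Type*} [CommRing R] {d : ℕ} (hd : 1 ≤ d) (x : R) :
    ∀ (m : ℕ), PowerSeries.coeff (R := R) (d * m) ((1 + PowerSeries.monomial (R := R) d x) ^ m) = x ^ m := by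
  intro m
  induction m with
  | zero => simp
  | succ m ih =>
    have hdd : d * (m + 1) = d * m + d := by ring
    rw [pow_succ, PowerSeries.coeff_mul]
    rw [Finset.sum_eq_single (d * m, d)]
    · rw [ih, coeff_one_add_monomial hd, if_neg (by omega), if_pos rfl, pow_succ]
    · intro ab hab hne
      rw [Finset.HasAntidiagonal.mem_antidiagonal] at hab
      rw [coeff_one_add_monomial hd]
      split_ifs with h1 h2
      · rw [coeff_one_add_monomial_pow_high hd x m ab.1 (by omega), zero_mul]
      · exfalso; apply hne; have : ab.1 = d * m := by omega
        exact Prod.ext this h2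
      · rw [mul_zero]
    · intro h
      exfalso; apply h
      rw [Finset.HasAntidiagonal.mem_antidiagonal]; ring

/-- The diagonal specialization: kills all variables except `i`. -/
def sig (C : Type) [Field C] {n : ℕ} (i : Fin n) :
    MvPolynomial (Fin n) C →ₐ[C] MvPolynomial (Fin n) C :=
  MvPolynomial.aeval (fun j => if j = i then MvPolynomial.X j else 0)

lemma coeff_sig (i : Fin n) (m : ℕ) (f : MvPolynomial (Fin n) C) :
    MvPolynomial.coeff (Finsupp.single i m) (sig C i f) =
      MvPolynomial.coeff (Finsupp.single i m) f := by
  conv_rhs => rw [← MvPolynomial.support_sum_monomial_coeff f]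
  conv_lhs => rw [← MvPolynomial.support_sum_monomial_coeff f]
  rw [map_sum, MvPolynomial.coeff_sum, MvPolynomial.coeff_sum]
  apply Finset.sum_congr rfl
  intro e _
  by_cases hcase : ∀ j ∈ e.support, j = i
  · -- e is supported at i only, so sig fixes the monomial
    have he : e = Finsupp.single i (e i) := by
      ext j
      by_cases hj : j = i
      · subst hj; simp
      · rw [Finsupp.single_eq_of_ne' (Ne.symm hj)]
        by_contra hne
        exact hj (hcase j (Finsupp.mem_support_iff.2 hne))
    have : sig C i (MvPolynomial.monomial e (MvPolynomial.coeff e f)) =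
        MvPolynomial.monomial e (MvPolynomial.coeff e f) := by
      rw [sig, MvPolynomial.aeval_monomial]
      conv_lhs => rw [he]
      rw [Finsupp.prod_single_index (by rw [pow_zero])]
      rw [if_pos rfl, MvPolynomial.X_pow_eq_monomial, MvPolynomial.algebraMap_eq,
        MvPolynomial.C_mul_monomial, mul_one, ← he]
    rw [this]
  · -- some other variable occurs; both coefficients vanish termwise
    push_neg at hcase
    obtain ⟨j, hj, hji⟩ := hcase
    have h1 : sig C i (MvPolynomial.monomial e (MvPolynomial.coeff e f)) = 0 := by
      rw [sig, MvPolynomial.aeval_monomial]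
      have : (e.prod fun j' k => (if j' = i then MvPolynomial.X j' else (0 : MvPolynomial (Fin n) C)) ^ k) = 0 := by
        apply Finset.prod_eq_zero hj
        simp only [hji, if_false]
        exact zero_pow (Finsupp.mem_support_iff.1 hj)
      rw [this, mul_zero]
    rw [h1, MvPolynomial.coeff_monomial, if_neg, MvPolynomial.coeff_zero]
    intro h
    apply hji
    have := Finsupp.mem_support_iff.1 hj
    rw [h] at this
    by_contra hne
    exact this (Finsupp.single_eq_of_ne' (Ne.symm hne))

lemma map_sig_W (i : Fin n) :
    PowerSeries.map (sig C i).toRingHom (W C n) =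
      1 + PowerSeries.monomial (R := _) ((i : ℕ) + 1) (MvPolynomial.X i) := by
  refine PowerSeries.ext fun k => ?_
  rw [PowerSeries.coeff_map, coeff_W, coeff_one_add_monomial (by omega)]
  by_cases h : 1 ≤ k ∧ k ≤ n
  · rw [dif_pos h]
    have h0 : ¬ (k = 0) := by omega
    rw [if_neg h0]
    by_cases h1 : k = (i : ℕ) + 1
    · rw [if_pos h1]
      have he : (⟨k - 1, by omega⟩ : Fin n) = i := by
        apply Fin.ext; simp only [Fin.val_mk]; omega
      rw [he]
      show sig C i (MvPolynomial.X i) = MvPolynomial.X i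
      rw [sig, MvPolynomial.aeval_X, if_pos rfl]
    · rw [if_neg h1]
      have hne : (⟨k - 1, by omega⟩ : Fin n) ≠ i := by
        intro h'
        apply h1
        have := congrArg Fin.val h'
        simp only [Fin.val_mk] at this
        omega
      show sig C i (MvPolynomial.X _) = 0
      rw [sig, MvPolynomial.aeval_X, if_neg hne]
  · rw [dif_neg h]
    by_cases h0 : k = 0
    · rw [if_pos h0, if_pos h0]
      exact map_one _
    · have h1 : ¬ (k = (i : ℕ) + 1) := by
        have := i.isLt; omega
      rw [if_neg h0, if_neg h0, if_neg h1]
      exact map_zero _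

lemma coeff_E_lead (i : Fin n) :
    MvPolynomial.coeff (Finsupp.single i p) (E C p n i) = 1 := by
  rw [← coeff_sig i p (E C p n i)]
  have : sig C i (E C p n i) =
      PowerSeries.coeff (R := _) (((i : ℕ) + 1) * p)
        ((PowerSeries.map (sig C i).toRingHom (W C n)) ^ p) := by
    rw [← map_pow, PowerSeries.coeff_map, E]
    rfl
  rw [this, map_sig_W, coeff_one_add_monomial_pow_top (by omega)]
  rw [MvPolynomial.X_pow_eq_monomial, MvPolynomial.coeff_monomial, if_pos rfl]


lemma E_last (hp : 1 ≤ p) :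
    E C p (n + 1) (Fin.last n) = MvPolynomial.X (Fin.last n) ^ p := by
  classical
  apply MvPolynomial.ext
  intro e
  rw [MvPolynomial.X_pow_eq_monomial, MvPolynomial.coeff_monomial]
  by_cases he : (Finsupp.single (Fin.last n) p) = e
  · rw [if_pos he, ← he]
    have h := coeff_E_lead (C := C) (p := p) (Fin.last n)
    exact h
  · rw [if_neg he]
    by_contra h0
    have hsupp : e ∈ (PowerSeries.coeff (R := _) (((Fin.last n : ℕ) + 1) * p)
        (W C (n+1) ^ p)).support := by
      rw [← E]; exact MvPolynomial.mem_support_iff.2 h0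
    obtain ⟨hw, hd⟩ := supp_W_pow hsupp
    have hwt : wt e = ((n : ℕ) + 1) * p := by rw [hw, Fin.val_last]
    have hle : ∀ j ∈ (Finset.univ : Finset (Fin (n+1))),
        ((j : ℕ) + 1) * e j ≤ ((n : ℕ) + 1) * e j := by
      intro j _
      exact Nat.mul_le_mul_right _ (by have := j.isLt; omega)
    have hsum2 : (∑ j : Fin (n+1), ((n : ℕ) + 1) * e j) = ((n : ℕ)+1) * dg e := by
      rw [dg, Finset.mul_sum]
    have hub : (∑ j : Fin (n+1), ((n : ℕ) + 1) * e j) ≤ ((n : ℕ)+1) * p := by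
      rw [hsum2]; exact Nat.mul_le_mul_left _ hd
    have hlow : wt e ≤ ∑ j : Fin (n+1), ((n : ℕ) + 1) * e j := by
      rw [wt]; exact Finset.sum_le_sum hle
    have heq : (∑ j : Fin (n+1), ((j : ℕ) + 1) * e j) =
        ∑ j : Fin (n+1), ((n : ℕ) + 1) * e j := by
      have h1 : wt e = ∑ j : Fin (n+1), ((j : ℕ) + 1) * e j := rfl
      omega
    have hpt := (Finset.sum_eq_sum_iff_of_le hle).1 heq
    have hzero : ∀ j : Fin (n+1), j ≠ Fin.last n → e j = 0 := by
      intro j hj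
      have h := hpt j (Finset.mem_univ j)
      by_contra hne
      have hcancel : (j : ℕ) + 1 = (n : ℕ) + 1 :=
        Nat.eq_of_mul_eq_mul_right (Nat.pos_of_ne_zero hne) h
      exact hj (Fin.ext (by rw [Fin.val_last]; omega))
    have hdg : dg e = p := by
      have h2 : ((n : ℕ)+1) * dg e = ((n : ℕ)+1) * p := by
        rw [← hsum2, ← heq]
        exact hwt
      exact Nat.eq_of_mul_eq_mul_left (by omega) h2
    have hel : e (Fin.last n) = p := by
      have h3 : dg e = e (Fin.last n) := by
        rw [dg, Finset.sum_eq_single (Fin.last n)]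
        · intro j _ hj; exact hzero j hj
        · simp
      omega
    apply he
    ext j
    by_cases hj : j = Fin.last n
    · subst hj; rw [hel, Finsupp.single_eq_same]
    · rw [hzero j hj, Finsupp.single_eq_of_ne' (fun hh => hj hh.symm)]

/-- the specialization `X_last := 0`, other variables shifted down. -/
def eps (C : Type) [Field C] (n : ℕ) :
    MvPolynomial (Fin (n+1)) C →ₐ[C] MvPolynomial (Fin n) C :=
  MvPolynomial.aeval (fun j : Fin (n+1) =>
    if h : (j : ℕ) < n then MvPolynomial.X ⟨j, h⟩ else 0)

lemma eps_X_castSucc (j : Fin n) :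
    eps C n (MvPolynomial.X (Fin.castSucc j)) = MvPolynomial.X j := by
  rw [eps, MvPolynomial.aeval_X, dif_pos (by simpa using j.isLt)]
  exact congrArg MvPolynomial.X (Fin.ext (by simp))

lemma eps_X_last : eps C n (MvPolynomial.X (Fin.last n)) = 0 := by
  rw [eps, MvPolynomial.aeval_X, dif_neg (by simp)]

lemma eps_W : PowerSeries.map (eps C n).toRingHom (W C (n+1)) = W C n := by
  refine PowerSeries.ext fun k => ?_
  rw [PowerSeries.coeff_map, coeff_W, coeff_W]
  by_cases h : 1 ≤ k ∧ k ≤ n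
  · rw [dif_pos (by omega : 1 ≤ k ∧ k ≤ n + 1), dif_pos h]
    show eps C n (MvPolynomial.X _) = _
    rw [eps, MvPolynomial.aeval_X, dif_pos (by simp; omega)]
  · rw [dif_neg h]
    by_cases h2 : 1 ≤ k ∧ k ≤ n + 1
    · -- k = n+1
      rw [dif_pos h2]
      have hk : k = n + 1 := by omega
      have h0 : ¬ (k = 0) := by omega
      rw [if_neg h0]
      show eps C n (MvPolynomial.X _) = 0
      rw [eps, MvPolynomial.aeval_X, dif_neg (by simp; omega)]
    · rw [dif_neg h2]
      by_cases h0 : k = 0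
      · rw [if_pos h0, if_pos h0]; exact map_one _
      · rw [if_neg h0, if_neg h0]; exact map_zero _

lemma eps_E (j : Fin n) :
    eps C n (E C p (n+1) (Fin.castSucc j)) = E C p n j := by
  have h1 : eps C n (E C p (n+1) (Fin.castSucc j)) =
      PowerSeries.coeff (R := _) (((Fin.castSucc j : ℕ) + 1) * p)
        ((PowerSeries.map (eps C n).toRingHom (W C (n+1))) ^ p) := by
    rw [← map_pow, PowerSeries.coeff_map, E]
    rfl
  rw [h1, eps_W, E, Fin.coe_castSucc]

theorem E_indep (hp : 1 ≤ p) :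
    ∀ n, Function.Injective (MvPolynomial.aeval (R := C) (E C p n)) := by
  intro n
  induction n with
  | zero =>
    rw [injective_iff_map_eq_zero]
    intro Q hQ
    obtain ⟨c, rfl⟩ := MvPolynomial.C_surjective (Fin 0) Q
    rw [MvPolynomial.aeval_C] at hQ
    have : c = 0 := by
      have h2 : MvPolynomial.C (σ := Fin 0) c = 0 := by
        rw [← hQ]; rfl
      simpa using h2
    rw [this, map_zero]
  | succ n ih =>
    rw [injective_iff_map_eq_zero]
    intro Q hQ
    -- setup
    set aeval' : MvPolynomial (Fin n) C →ₐ[C] MvPolynomial (Fin (n+1)) C :=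
      MvPolynomial.aeval (fun i : Fin n => E C p (n+1) ((Fin.rev i).castSucc)) with haeval'
    set Θ : Polynomial (MvPolynomial (Fin n) C) →+* MvPolynomial (Fin (n+1)) C :=
      Polynomial.eval₂RingHom aeval'.toRingHom (MvPolynomial.X (Fin.last n) ^ p) with hTheta_def
    set Φ : MvPolynomial (Fin (n+1)) C ≃ₐ[C] Polynomial (MvPolynomial (Fin n) C) :=
      (MvPolynomial.renameEquiv C Fin.revPerm).trans (MvPolynomial.finSuccEquiv C n) with hPhi_def
    set ξ : MvPolynomial (Fin n) C →ₐ[C] MvPolynomial (Fin n) C :=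
      MvPolynomial.aeval (fun i : Fin n => E C p n (Fin.rev i)) with hxi_def
    have hξinj : Function.Injective ξ := by
      intro a b hab
      have h2 : MvPolynomial.aeval (E C p n) (MvPolynomial.rename (⇑Fin.revPerm) a) =
          MvPolynomial.aeval (E C p n) (MvPolynomial.rename (⇑Fin.revPerm) b) := by
        rw [MvPolynomial.aeval_rename, MvPolynomial.aeval_rename]
        exact hab
      exact MvPolynomial.rename_injective _ Fin.revPerm.injective (ih h2)
    have hXlast : MvPolynomial.X (Fin.last n) ^ p ≠ (0 : MvPolynomial (Fin (n+1)) C) :=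
      pow_ne_zero _ (MvPolynomial.X_ne_zero _)
    -- epsilon kills Θ up to constant term
    have hepsaeval' : ∀ x : MvPolynomial (Fin n) C, eps C n (aeval' x) = ξ x := by
      intro x
      have : (eps C n).comp aeval' = ξ := by
        apply MvPolynomial.algHom_ext
        intro i
        rw [AlgHom.comp_apply, haeval', hxi_def, MvPolynomial.aeval_X,
          MvPolynomial.aeval_X, eps_E]
      rw [← this, AlgHom.comp_apply]
    have hepsTheta : ∀ g : Polynomial (MvPolynomial (Fin n) C),
        eps C n (Θ g) = ξ (g.coeff 0) := by
      intro g
      have h1 : (eps C n) (Θ g) =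
          Polynomial.eval₂ ((eps C n).toRingHom.comp aeval'.toRingHom)
            (eps C n (MvPolynomial.X (Fin.last n) ^ p)) g := by
        rw [hTheta_def, Polynomial.coe_eval₂RingHom]
        exact Polynomial.hom_eval₂ g aeval'.toRingHom (eps C n).toRingHom _
      rw [h1, map_pow, eps_X_last, zero_pow (by omega : p ≠ 0),
        Polynomial.eval₂_at_zero]
      exact hepsaeval' _
    -- the inner induction: Θ is injective
    have hTheta : ∀ d : ℕ, ∀ g : Polynomial (MvPolynomial (Fin n) C),
        g.natDegree ≤ d → Θ g = 0 → g = 0 := by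
      intro d
      induction d with
      | zero =>
        intro g hdeg hzero
        have hc0 : g.coeff 0 = 0 := by
          apply hξinj
          rw [← hepsTheta g, hzero, map_zero, map_zero]
        rw [Polynomial.eq_C_of_natDegree_le_zero hdeg, hc0, map_zero]
      | succ d ihd =>
        intro g hdeg hzero
        have hc0 : g.coeff 0 = 0 := by
          apply hξinj
          rw [← hepsTheta g, hzero, map_zero, map_zero]
        obtain ⟨g₁, rfl⟩ := Polynomial.X_dvd_iff.2 hc0
        have hg₁ : Θ g₁ = 0 := by
          have h2 : Θ Polynomial.X * Θ g₁ = 0 := by rw [← map_mul]; exact hzero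
          have h3 : Θ Polynomial.X = MvPolynomial.X (Fin.last n) ^ p := by
            rw [hTheta_def]; exact Polynomial.eval₂_X _ _
          rw [h3] at h2
          rcases mul_eq_zero.1 h2 with h | h
          · exact absurd h hXlast
          · exact h
        by_cases hg₁0 : g₁ = 0
        · rw [hg₁0, mul_zero]
        · have hdeg₁ : g₁.natDegree ≤ d := by
            have h4 : (Polynomial.X * g₁).natDegree = 1 + g₁.natDegree := by
              rw [Polynomial.natDegree_mul Polynomial.X_ne_zero hg₁0,
                Polynomial.natDegree_X]
            omega
          rw [ihd g₁ hdeg₁ hg₁, mul_zero]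
    -- commutation
    have hcomm : ∀ R : MvPolynomial (Fin (n+1)) C,
        Θ (Φ R) = MvPolynomial.aeval (E C p (n+1)) R := by
      intro R
      induction R using MvPolynomial.induction_on with
      | C a =>
        rw [MvPolynomial.aeval_C]
        have h1 : Φ (MvPolynomial.C a) = Polynomial.C (MvPolynomial.C a) := by
          rw [hPhi_def]
          simp [MvPolynomial.finSuccEquiv_apply, MvPolynomial.eval₂Hom_C]
        rw [h1, hTheta_def]
        rw [Polynomial.coe_eval₂RingHom, Polynomial.eval₂_C]
        show (MvPolynomial.aeval fun i : Fin n => E C p (n+1) ((Fin.rev i).castSucc))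
          (MvPolynomial.C a) = _
        rw [MvPolynomial.aeval_C]
      | add f g hf hg => rw [map_add, map_add, hf, hg, map_add]
      | mul_X f j hf =>
        rw [map_mul, map_mul, hf, map_mul]
        congr 1
        -- Θ (Φ (X j)) = aeval E (X j) = E j
        rw [MvPolynomial.aeval_X]
        induction j using Fin.lastCases with
        | last =>
          have h1 : Φ (MvPolynomial.X (Fin.last n)) = Polynomial.X := by
            rw [hPhi_def]
            simp [MvPolynomial.renameEquiv_apply, Fin.revPerm_apply, Fin.rev_last,
              MvPolynomial.finSuccEquiv_X_zero]
          rw [h1, hTheta_def, Polynomial.coe_eval₂RingHom, Polynomial.eval₂_X,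
            E_last hp]
        | cast i =>
          have h1 : Φ (MvPolynomial.X (Fin.castSucc i)) =
              Polynomial.C (MvPolynomial.X (Fin.rev i)) := by
            rw [hPhi_def]
            simp [MvPolynomial.renameEquiv_apply, Fin.revPerm_apply,
              Fin.rev_castSucc, MvPolynomial.finSuccEquiv_X_succ]
          rw [h1, hTheta_def, Polynomial.coe_eval₂RingHom, Polynomial.eval₂_C]
          show (MvPolynomial.aeval fun i : Fin n => E C p (n+1) ((Fin.rev i).castSucc))
            (MvPolynomial.X (Fin.rev i)) = _
          rw [MvPolynomial.aeval_X, Fin.rev_rev]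
    -- conclusion
    have hQ2 : Θ (Φ Q) = 0 := by rw [hcomm, hQ]
    have hQ3 : Φ Q = 0 := hTheta _ _ le_rfl hQ2
    have := Φ.injective (by rw [hQ3, map_zero] : Φ Q = Φ 0)
    exact this


lemma reduction (M : Submodule C (MvPolynomial (Fin n) C))
    (hstd : ∀ e : Fin n →₀ ℕ, (∀ j, e j < p) → MvPolynomial.monomial e (1 : C) ∈ M)
    (hstep : ∀ (i : Fin n) (e : Fin n →₀ ℕ), p ≤ e i →
      (∀ e' : Fin n →₀ ℕ, (wt e' < wt e ∨ (wt e' = wt e ∧ qd e < qd e')) →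
        MvPolynomial.monomial e' (1 : C) ∈ M) →
      MvPolynomial.monomial e (1 : C) ∈ M) :
    ∀ f : MvPolynomial (Fin n) C, f ∈ M := by
  classical
  have key : ∀ Wb : ℕ, ∀ K : ℕ, ∀ e : Fin n →₀ ℕ, wt e = Wb → n * Wb - qd e ≤ K →
      MvPolynomial.monomial e (1 : C) ∈ M := by
    intro Wb
    induction Wb using Nat.strong_induction_on with
    | _ Wb ihW =>
      intro K
      induction K with
      | zero =>
        intro e hwe hK
        by_cases hstd' : ∀ j, e j < p
        · exact hstd e hstd'
        · push_neg at hstd'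
          obtain ⟨i, hi⟩ := hstd'
          apply hstep i e hi
          intro e' h'
          rcases h' with h' | ⟨h1, h2⟩
          · exact ihW (wt e') (by omega) (n * wt e') e' rfl (Nat.sub_le _ _)
          · exfalso
            have hq := qd_le e'
            rw [h1, hwe] at hq
            omega
      | succ K ihK =>
        intro e hwe hK
        by_cases hstd' : ∀ j, e j < p
        · exact hstd e hstd'
        · push_neg at hstd'
          obtain ⟨i, hi⟩ := hstd'
          apply hstep i e hi
          intro e' h'
          rcases h' with h' | ⟨h1, h2⟩
          · exact ihW (wt e') (by omega) (n * wt e') e' rfl (Nat.sub_le _ _)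
          · apply ihK e' (by omega)
            have hq := qd_le e'
            rw [h1, hwe] at hq
            omega
  intro f
  have hrepr : f = ∑ v ∈ f.support, MvPolynomial.monomial v (MvPolynomial.coeff v f) :=
    (MvPolynomial.support_sum_monomial_coeff f).symm
  rw [hrepr]
  apply Submodule.sum_mem
  intro e _
  have h1 : MvPolynomial.monomial e (MvPolynomial.coeff e f) =
      (MvPolynomial.coeff e f) • MvPolynomial.monomial e (1 : C) := by
    rw [MvPolynomial.smul_monomial, smul_eq_mul, mul_one]
  rw [h1]
  exact Submodule.smul_mem _ _ (key (wt e) (n * wt e) e rfl (Nat.sub_le _ _))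

lemma qd_gt {i : Fin n} {g : Fin n →₀ ℕ} (hdg : dg g ≤ p)
    (hwt : wt g = ((i : ℕ) + 1) * p) (hne : g ≠ Finsupp.single i p) :
    ((i : ℕ) + 1) ^ 2 * p < qd g := by
  by_contra hle
  push_neg at hle
  set a : ℤ := ((i : ℕ) : ℤ) + 1 with ha
  have hD : (0 : ℤ) ≤ ∑ j : Fin n, (g j : ℤ) * ((((j : ℕ) : ℤ) + 1) - a) ^ 2 :=
    Finset.sum_nonneg fun j _ => mul_nonneg (Int.natCast_nonneg _) (sq_nonneg _)
  have hexp : (∑ j : Fin n, (g j : ℤ) * ((((j : ℕ) : ℤ) + 1) - a) ^ 2)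
      = (qd g : ℤ) - 2 * a * (wt g : ℤ) + a ^ 2 * (dg g : ℤ) := by
    rw [qd, wt, dg]
    push_cast
    rw [Finset.mul_sum, Finset.mul_sum, ← Finset.sum_sub_distrib, ← Finset.sum_add_distrib]
    apply Finset.sum_congr rfl
    intro j _
    ring
  have hwtZ : (wt g : ℤ) = a * p := by rw [hwt]; push_cast; ring
  have hqdZ : (qd g : ℤ) ≤ a ^ 2 * p := by
    have : ((qd g : ℕ) : ℤ) ≤ ((((i:ℕ)+1)^2 * p : ℕ) : ℤ) := Int.ofNat_le.2 hle
    calc (qd g : ℤ) ≤ ((((i:ℕ)+1)^2 * p : ℕ) : ℤ) := this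
    _ = a ^ 2 * p := by push_cast; ring
  have hdgZ : (dg g : ℤ) ≤ (p : ℤ) := Int.ofNat_le.2 hdg
  have ha2 : (0:ℤ) < a ^ 2 := by positivity
  -- conclude equalities
  have hDval : (∑ j : Fin n, (g j : ℤ) * ((((j : ℕ) : ℤ) + 1) - a) ^ 2) =
      (qd g : ℤ) - 2 * a ^ 2 * p + a ^ 2 * (dg g : ℤ) := by
    rw [hexp, hwtZ]; ring
  have hdgeq : (dg g : ℤ) = (p : ℤ) := by nlinarith
  have hDzero : (∑ j : Fin n, (g j : ℤ) * ((((j : ℕ) : ℤ) + 1) - a) ^ 2) = 0 := by nlinarith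
  have hterm := (Finset.sum_eq_zero_iff_of_nonneg
    (fun j _ => mul_nonneg (Int.natCast_nonneg _) (sq_nonneg _))).1 hDzero
  have hzero : ∀ j : Fin n, j ≠ i → g j = 0 := by
    intro j hj
    have h := hterm j (Finset.mem_univ j)
    rcases mul_eq_zero.1 h with h' | h'
    · exact Int.ofNat_eq_zero.1 h'
    · exfalso
      have : (((j : ℕ) : ℤ) + 1) = a := by
        have := sq_eq_zero_iff.1 h'
        omega
      rw [ha] at this
      have : (j : ℕ) = (i : ℕ) := by omega
      exact hj (Fin.ext this)
  have hdgp : dg g = p := by exact_mod_cast hdgeq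
  apply hne
  have hgi : g i = p := by
    have h3 : dg g = g i := by
      rw [dg, Finset.sum_eq_single i]
      · intro j _ hj; exact hzero j hj
      · simp
    omega
  ext j
  by_cases hj : j = i
  · subst hj; rw [hgi, Finsupp.single_eq_same]
  · rw [hzero j hj, Finsupp.single_eq_of_ne' (fun hh => hj hh.symm)]

/-- the lower-order part of `E i`. -/
def G (C : Type) [Field C] (p n : ℕ) (i : Fin n) : MvPolynomial (Fin n) C :=
  E C p n i - MvPolynomial.monomial (Finsupp.single i p) 1

lemma coeff_G_self (i : Fin n) :
    MvPolynomial.coeff (Finsupp.single i p) (G C p n i) = 0 := by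
  rw [G, MvPolynomial.coeff_sub, coeff_E_lead, MvPolynomial.coeff_monomial, if_pos rfl,
    sub_self]

lemma coeff_G_ne {i : Fin n} {g : Fin n →₀ ℕ} (hg : g ≠ Finsupp.single i p) :
    MvPolynomial.coeff g (G C p n i) = MvPolynomial.coeff g (E C p n i) := by
  rw [G, MvPolynomial.coeff_sub, MvPolynomial.coeff_monomial,
    if_neg (fun h => hg h.symm), sub_zero]

lemma supp_G {i : Fin n} {g : Fin n →₀ ℕ} (hg : g ∈ (G C p n i).support) :
    wt g = ((i : ℕ) + 1) * p ∧ dg g ≤ p ∧ g ≠ Finsupp.single i p := by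
  have hne : g ≠ Finsupp.single i p := by
    intro h
    apply MvPolynomial.mem_support_iff.1 hg
    rw [h]
    exact coeff_G_self i
  have hE : g ∈ (E C p n i).support := by
    rw [MvPolynomial.mem_support_iff, ← coeff_G_ne hne]
    exact MvPolynomial.mem_support_iff.1 hg
  rw [E] at hE
  obtain ⟨hw, hd⟩ := supp_W_pow hE
  exact ⟨hw, hd, hne⟩

lemma monomial_step {i : Fin n} {e : Fin n →₀ ℕ} (he : p ≤ e i) :
    MvPolynomial.monomial e (1 : C) =
      E C p n i * MvPolynomial.monomial (e - Finsupp.single i p) 1 -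
      ∑ g ∈ (G C p n i).support, MvPolynomial.coeff g (G C p n i) •
        MvPolynomial.monomial (g + (e - Finsupp.single i p)) (1 : C) := by
  classical
  have hsplit : Finsupp.single i p + (e - Finsupp.single i p) = e := by
    ext j
    by_cases hj : j = i
    · subst hj
      simp only [Finsupp.add_apply, Finsupp.tsub_apply, Finsupp.single_eq_same]
      omega
    · simp only [Finsupp.add_apply, Finsupp.tsub_apply,
        Finsupp.single_eq_of_ne' (fun hh => hj hh.symm)]
      omega
  have hE : E C p n i = MvPolynomial.monomial (Finsupp.single i p) 1 + G C p n i := by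
    rw [G, add_sub_cancel]
  rw [hE, add_mul, MvPolynomial.monomial_mul, one_mul, hsplit]
  have hGm : G C p n i * MvPolynomial.monomial (e - Finsupp.single i p) 1 =
      ∑ g ∈ (G C p n i).support, MvPolynomial.coeff g (G C p n i) •
        MvPolynomial.monomial (g + (e - Finsupp.single i p)) (1 : C) := by
    conv_lhs => rw [← MvPolynomial.support_sum_monomial_coeff (G C p n i)]
    rw [Finset.sum_mul]
    apply Finset.sum_congr rfl
    intro g _
    rw [MvPolynomial.monomial_mul, mul_one, MvPolynomial.smul_monomial, smul_eq_mul, mul_one]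
  rw [hGm]
  ring


section MainAux

variable {C : Type} [Field C] {p s : ℕ}

/-- standard monomials, exponents < p, as a family -/
def stdv (C : Type) [Field C] (p s : ℕ) : (Fin s → Fin p) → MvPolynomial (Fin s) C :=
  fun v => MvPolynomial.monomial (Finsupp.equivFunOnFinite.symm (fun j => (v j : ℕ))) (1 : C)

lemma mem_stdv {e : Fin s →₀ ℕ} (he : ∀ j, e j < p) :
    MvPolynomial.monomial e (1 : C) ∈ Set.range (stdv C p s) := by
  refine ⟨fun j => ⟨e j, he j⟩, ?_⟩
  rw [stdv]
  congr 1
  ext j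
  simp

lemma span_sup_eq_top (hp : 1 ≤ p) (u : Fin s → C) (J : Ideal (MvPolynomial (Fin s) C))
    (hJ : ∀ j : Fin s, E C p s j - MvPolynomial.C (u j) ∈ J) :
    Submodule.span C (Set.range (stdv C p s)) ⊔
      Submodule.restrictScalars C J = ⊤ := by
  classical
  rw [eq_top_iff]
  intro f _
  apply reduction
  · intro e he
    exact Submodule.mem_sup_left (Submodule.subset_span (mem_stdv he))
  · intro i e he ih
    rw [monomial_step he]
    set e' := e - Finsupp.single i p with he'def
    have hsplit : Finsupp.single i p + e' = e := by
      rw [he'def]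
      ext j
      by_cases hj : j = i
      · subst hj
        simp only [Finsupp.add_apply, Finsupp.tsub_apply, Finsupp.single_eq_same]
        omega
      · simp only [Finsupp.add_apply, Finsupp.tsub_apply,
          Finsupp.single_eq_of_ne' (fun hh => hj hh.symm)]
        omega
    apply Submodule.sub_mem
    · have hdecomp : E C p s i * MvPolynomial.monomial e' 1 =
          (E C p s i - MvPolynomial.C (u i)) * MvPolynomial.monomial e' 1
          + u i • MvPolynomial.monomial e' 1 := by
        rw [MvPolynomial.smul_eq_C_mul]; ring
      rw [hdecomp]
      apply Submodule.add_mem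
      · exact Submodule.mem_sup_right (Ideal.mul_mem_right _ _ (hJ i))
      · apply Submodule.smul_mem
        apply ih
        left
        have hwte : wt e = ((i : ℕ) + 1) * p + wt e' := by
          rw [← hsplit, wt_add, wt_single]
        have hip : 0 < ((i : ℕ) + 1) * p := Nat.mul_pos (by omega) (by omega)
        omega
    · apply Submodule.sum_mem
      intro g hg
      apply Submodule.smul_mem
      obtain ⟨hwg, hdg, hneg⟩ := supp_G hg
      apply ih
      right
      constructor
      · rw [wt_add, hwg, ← hsplit, wt_add, wt_single]
      · have hq1 : qd e = ((i : ℕ) + 1) ^ 2 * p + qd e' := by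
          rw [← hsplit, qd_add, qd_single]
        rw [qd_add, hq1]
        have := qd_gt hdg hwg hneg
        omega

lemma exists_indicator (T : Finset (Fin s → C)) (t : Fin s → C) :
    ∃ f : MvPolynomial (Fin s) C, MvPolynomial.eval t f = 1 ∧
      ∀ t' ∈ T, t' ≠ t → MvPolynomial.eval t' f = 0 := by
  classical
  have hpick : ∀ x : {x // x ∈ T.erase t}, ∃ j : Fin s, x.1 j ≠ t j := by
    intro x
    exact Function.ne_iff.1 (Finset.ne_of_mem_erase x.2)
  choose pick hspec using hpick
  refine ⟨∏ x ∈ (T.erase t).attach,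
    (MvPolynomial.C ((t (pick x) - x.1 (pick x))⁻¹) *
      (MvPolynomial.X (pick x) - MvPolynomial.C (x.1 (pick x)))), ?_, ?_⟩
  · rw [map_prod]
    apply Finset.prod_eq_one
    intro x _
    rw [map_mul, map_sub, MvPolynomial.eval_C, MvPolynomial.eval_C, MvPolynomial.eval_X]
    rw [inv_mul_cancel₀]
    exact sub_ne_zero.2 (fun h => hspec x h.symm)
  · intro t' ht' hne
    rw [map_prod]
    apply Finset.prod_eq_zero (Finset.mem_attach _ (⟨t', Finset.mem_erase.2 ⟨hne, ht'⟩⟩ :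
      {x // x ∈ T.erase t}))
    rw [map_mul, map_sub, MvPolynomial.eval_C, MvPolynomial.eval_C, MvPolynomial.eval_X]
    rw [sub_self, mul_zero]

/-- evaluation as a C-linear map -/
def evalLin (t : Fin s → C) : MvPolynomial (Fin s) C →ₗ[C] C where
  toFun := MvPolynomial.eval t
  map_add' := fun f g => map_add _ f g
  map_smul' := fun c f => by
    simp only [MvPolynomial.smul_eq_C_mul, map_mul, MvPolynomial.eval_C, RingHom.id_apply,
      smul_eq_mul]

lemma card_le_of_sol (hp : 1 ≤ p) (u : Fin s → C) (T : Finset (Fin s → C))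
    (hT : ∀ b ∈ T, ∀ j : Fin s, MvPolynomial.eval b (E C p s j) = u j) :
    T.card ≤ p ^ s := by
  classical
  let J : Ideal (MvPolynomial (Fin s) C) :=
    { carrier := {f | ∀ b ∈ T, MvPolynomial.eval b f = 0}
      add_mem' := by
        intro a b ha hb t ht
        rw [map_add, ha t ht, hb t ht, add_zero]
      zero_mem' := by
        intro t ht
        exact map_zero _
      smul_mem' := by
        intro c x hx t ht
        rw [smul_eq_mul, map_mul, hx t ht, mul_zero] }
  have hmemJ : ∀ f : MvPolynomial (Fin s) C,
      f ∈ J ↔ ∀ b ∈ T, MvPolynomial.eval b f = 0 := fun f => Iff.rfl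
  have hJ : ∀ j : Fin s, E C p s j - MvPolynomial.C (u j) ∈ J := by
    intro j
    rw [hmemJ]
    intro b hb
    rw [map_sub, MvPolynomial.eval_C, hT b hb j, sub_self]
  have htop := span_sup_eq_top hp u J hJ
  let L : MvPolynomial (Fin s) C →ₗ[C] (↥T → C) :=
    LinearMap.pi (fun t : ↥T => evalLin (t : Fin s → C))
  have hLeval : ∀ f (t : ↥T), L f t = MvPolynomial.eval (t : Fin s → C) f := fun f t => rfl
  have hLsurj : Function.Surjective L := by
    intro g
    have hind := fun (t : ↥T) => exists_indicator T (t : Fin s → C)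
    choose find h1 h0 using hind
    refine ⟨∑ t : ↥T, MvPolynomial.C (g t) * find t, ?_⟩
    funext t''
    rw [hLeval, map_sum, Finset.sum_eq_single t'']
    · rw [map_mul, MvPolynomial.eval_C, h1 t'', mul_one]
    · intro t _ hne
      have hne' : (t'' : Fin s → C) ≠ (t : Fin s → C) := fun h => hne (Subtype.ext h.symm)
      rw [map_mul, h0 t (t'' : Fin s → C) t''.2 hne', mul_zero]
    · intro h
      exact absurd (Finset.mem_univ _) h
  -- the image of the span of the standard monomials fills everything
  have hmap : Submodule.map L (Submodule.span C (Set.range (stdv C p s)) ⊔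
      Submodule.restrictScalars C J) = ⊤ := by
    rw [htop, Submodule.map_top, LinearMap.range_eq_top.2 hLsurj]
  rw [Submodule.map_sup, Submodule.map_span] at hmap
  have hJ0 : Submodule.map L (Submodule.restrictScalars C J) = ⊥ := by
    rw [eq_bot_iff]
    rintro x ⟨f, hf, rfl⟩
    have : L f = 0 := by
      funext t
      rw [hLeval]
      exact ((hmemJ f).1 hf) (t : Fin s → C) t.2
    simp [this]
  rw [hJ0, sup_bot_eq, ← Set.range_comp] at hmap
  -- surjective linear map from functions
  let Ξ : ((Fin s → Fin p) → C) →ₗ[C] (↥T → C) :=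
    Fintype.linearCombination C (fun v => L (stdv C p s v))
  have hΞsurj : Function.Surjective Ξ := by
    intro g
    have hg : g ∈ Submodule.span C (Set.range (⇑L ∘ stdv C p s)) := by
      rw [hmap]; exact Submodule.mem_top
    obtain ⟨c, hc⟩ := (Submodule.mem_span_range_iff_exists_fun C).1 hg
    refine ⟨c, ?_⟩
    rw [Fintype.linearCombination_apply]
    exact hc
  have hr1 : LinearMap.range Ξ = ⊤ := LinearMap.range_eq_top.2 hΞsurj
  have hrank : Module.finrank C (↥T → C) ≤ Module.finrank C ((Fin s → Fin p) → C) := by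
    have hr2 := LinearMap.finrank_range_le Ξ
    rw [hr1, finrank_top] at hr2
    exact hr2
  have h1 : Module.finrank C (↥T → C) = T.card := by
    rw [Module.finrank_pi, Fintype.card_coe]
  have h2 : Module.finrank C ((Fin s → Fin p) → C) = p ^ s := by
    rw [Module.finrank_pi]
    simp
  omega

end MainAux


section Existence

variable {C : Type} [Field C] [IsAlgClosed C] {p s : ℕ}

lemma exists_sol (hp : 1 ≤ p) (u : Fin s → C) :
    ∃ b : Fin s → C, ∀ j : Fin s, MvPolynomial.eval b (E C p s j) = u j := by
  classical
  set ψ : MvPolynomial (Fin s) C →ₐ[C] MvPolynomial (Fin s) C :=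
    MvPolynomial.aeval (E C p s) with hψdef
  have hinj : Function.Injective ψ := E_indep hp s
  set R₀ : Subalgebra C (MvPolynomial (Fin s) C) := ψ.range with hR₀def
  -- the polynomial ring is spanned over R₀ by the standard monomials
  have hspanR : ∀ f : MvPolynomial (Fin s) C,
      f ∈ Submodule.restrictScalars C
        (Submodule.span R₀ (Set.range (stdv C p s))) := by
    apply reduction
    · intro e he
      exact Submodule.subset_span (mem_stdv he)
    · intro i e he ih
      rw [monomial_step he]
      set e' := e - Finsupp.single i p with he'def
      have hsplit : Finsupp.single i p + e' = e := by
        rw [he'def]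
        ext j
        by_cases hj : j = i
        · subst hj
          simp only [Finsupp.add_apply, Finsupp.tsub_apply, Finsupp.single_eq_same]
          omega
        · simp only [Finsupp.add_apply, Finsupp.tsub_apply,
            Finsupp.single_eq_of_ne' (fun hh => hj hh.symm)]
          omega
      apply Submodule.sub_mem
      · -- E i * m' ∈ span R₀
        have hEi : E C p s i ∈ R₀ := (AlgHom.mem_range ψ).2 ⟨MvPolynomial.X i, MvPolynomial.aeval_X _ i⟩
        have hm' : MvPolynomial.monomial e' (1 : C) ∈
            Submodule.span R₀ (Set.range (stdv C p s)) := by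
          apply ih
          left
          have hwte : wt e = ((i : ℕ) + 1) * p + wt e' := by
            rw [← hsplit, wt_add, wt_single]
          have hip : 0 < ((i : ℕ) + 1) * p := Nat.mul_pos (by omega) (by omega)
          omega
        have hsm := Submodule.smul_mem
          (Submodule.span R₀ (Set.range (stdv C p s))) (⟨E C p s i, hEi⟩ : R₀) hm'
        have heq : (⟨E C p s i, hEi⟩ : R₀) • MvPolynomial.monomial e' (1 : C) =
            E C p s i * MvPolynomial.monomial e' (1 : C) := rfl
        rw [heq] at hsm
        exact hsm
      · apply Submodule.sum_mem
        intro g hg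
        apply Submodule.smul_mem
        obtain ⟨hwg, hdg, hneg⟩ := supp_G hg
        apply ih
        right
        constructor
        · rw [wt_add, hwg, ← hsplit, wt_add, wt_single]
        · have hq1 : qd e = ((i : ℕ) + 1) ^ 2 * p + qd e' := by
            rw [← hsplit, qd_add, qd_single]
          rw [qd_add, hq1]
          have := qd_gt hdg hwg hneg
          omega
  have hspan : Submodule.span R₀ (Set.range (stdv C p s)) = ⊤ := by
    rw [eq_top_iff]
    intro f _
    exact hspanR f
  have hfin : Module.Finite R₀ (MvPolynomial (Fin s) C) := by
    constructor
    rw [← hspan]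
    exact Submodule.fg_span (Set.finite_range _)
  haveI := hfin
  haveI hint : Algebra.IsIntegral R₀ (MvPolynomial (Fin s) C) :=
    Algebra.IsIntegral.of_finite _ _
  -- a maximal ideal of R₀ containing the relevant elements
  set ι : MvPolynomial (Fin s) C ≃ₐ[C] R₀ := AlgEquiv.ofInjective ψ hinj with hιdef
  set χ₀ : R₀ →+* C := (MvPolynomial.eval u).comp (ι.symm : R₀ ≃ₐ[C] _).toAlgHom.toRingHom
    with hχ₀def
  have hχ₀surj : Function.Surjective χ₀ := by
    intro c
    refine ⟨ι (MvPolynomial.C c), ?_⟩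
    rw [hχ₀def, RingHom.comp_apply]
    have h1 : (ι.symm : R₀ ≃ₐ[C] _).toAlgHom.toRingHom (ι (MvPolynomial.C c)) =
        MvPolynomial.C c := by
      show ι.symm (ι (MvPolynomial.C c)) = MvPolynomial.C c
      rw [AlgEquiv.symm_apply_apply]
    rw [h1, MvPolynomial.eval_C]
  set m₀ : Ideal R₀ := RingHom.ker χ₀ with hm₀def
  haveI hm₀max : m₀.IsMaximal := RingHom.ker_isMaximal_of_surjective χ₀ hχ₀surj
  have hker : RingHom.ker (algebraMap R₀ (MvPolynomial (Fin s) C)) ≤ m₀ := by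
    intro x hx
    rw [RingHom.mem_ker] at hx
    have hx0 : x = 0 := Subtype.ext hx
    rw [hx0]
    exact zero_mem _
  obtain ⟨P, hPmax, hPcomap⟩ :=
    Ideal.exists_ideal_over_maximal_of_isIntegral (R := R₀) m₀ hker
  -- the equations sit inside P
  have hPfP : ∀ j : Fin s, E C p s j - MvPolynomial.C (u j) ∈ P := by
    intro j
    have hXj : ψ (MvPolynomial.X j - MvPolynomial.C (u j)) =
        E C p s j - MvPolynomial.C (u j) := by
      rw [map_sub, hψdef, MvPolynomial.aeval_X]
      congr 1
      rw [MvPolynomial.aeval_C]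
      rfl
    have h1 : ι (MvPolynomial.X j - MvPolynomial.C (u j)) ∈ m₀ := by
      rw [hm₀def, RingHom.mem_ker, hχ₀def, RingHom.comp_apply]
      have h2 : (ι.symm : R₀ ≃ₐ[C] _).toAlgHom.toRingHom
          (ι (MvPolynomial.X j - MvPolynomial.C (u j))) =
          MvPolynomial.X j - MvPolynomial.C (u j) := by
        show ι.symm (ι _) = _
        rw [AlgEquiv.symm_apply_apply]
      rw [h2, map_sub, MvPolynomial.eval_X, MvPolynomial.eval_C, sub_self]
    have h3 : ι (MvPolynomial.X j - MvPolynomial.C (u j)) ∈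
        Ideal.comap (algebraMap R₀ (MvPolynomial (Fin s) C)) P := by
      rw [hPcomap]
      exact h1
    rw [Ideal.mem_comap] at h3
    have h4 : algebraMap R₀ (MvPolynomial (Fin s) C)
        (ι (MvPolynomial.X j - MvPolynomial.C (u j))) =
        E C p s j - MvPolynomial.C (u j) := by
      rw [← hXj]
      exact AlgEquiv.ofInjective_apply ψ hinj _
    rw [h4] at h3
    exact h3
  -- quotient by P is C itself
  haveI := hPmax
  haveI hPprime : P.IsPrime := hPmax.isPrime
  have hfinq : Module.Finite C (MvPolynomial (Fin s) C ⧸ P) := by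
    have htop2 := span_sup_eq_top hp u P hPfP
    constructor
    have hmapq : Submodule.map (Ideal.Quotient.mkₐ C P).toLinearMap
        (Submodule.span C (Set.range (stdv C p s)) ⊔ Submodule.restrictScalars C P) = ⊤ := by
      rw [htop2, Submodule.map_top, LinearMap.range_eq_top.2]
      exact Ideal.Quotient.mkₐ_surjective C P
    rw [Submodule.map_sup, Submodule.map_span] at hmapq
    have hmapP : Submodule.map (Ideal.Quotient.mkₐ C P).toLinearMap
        (Submodule.restrictScalars C P) = ⊥ := by
      rw [eq_bot_iff]
      rintro x ⟨f, hf, rfl⟩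
      have : (Ideal.Quotient.mkₐ C P).toLinearMap f = 0 := by
        show Ideal.Quotient.mk P f = 0
        exact Ideal.Quotient.eq_zero_iff_mem.2 hf
      simp [this]
    rw [hmapP, sup_bot_eq, ← Set.range_comp] at hmapq
    rw [← hmapq]
    exact Submodule.fg_span (Set.finite_range _)
  haveI := hfinq
  haveI : Algebra.IsIntegral C (MvPolynomial (Fin s) C ⧸ P) :=
    Algebra.IsIntegral.of_finite _ _
  haveI : Nontrivial (MvPolynomial (Fin s) C ⧸ P) :=
    Ideal.Quotient.nontrivial_iff.mpr hPmax.ne_top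
  have hsurj2 : Function.Surjective (algebraMap C (MvPolynomial (Fin s) C ⧸ P)) :=
    IsAlgClosed.algebraMap_bijective_of_isIntegral.2
  have hinj2 : Function.Injective (algebraMap C (MvPolynomial (Fin s) C ⧸ P)) :=
    (algebraMap C _).injective
  set eqv : C ≃+* (MvPolynomial (Fin s) C ⧸ P) :=
    RingEquiv.ofBijective (algebraMap C _) ⟨hinj2, hsurj2⟩ with heqvdef
  set b : Fin s → C := fun j => eqv.symm (Ideal.Quotient.mk P (MvPolynomial.X j)) with hbdef
  set χ : MvPolynomial (Fin s) C →+* C :=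
    (eqv.symm : (MvPolynomial (Fin s) C ⧸ P) ≃+* C).toRingHom.comp
      (Ideal.Quotient.mk P) with hχdef
  have hχeval : χ = (MvPolynomial.eval b : MvPolynomial (Fin s) C →+* C) := by
    apply MvPolynomial.ringHom_ext
    · intro c
      rw [hχdef, RingHom.comp_apply, MvPolynomial.eval_C]
      show eqv.symm (Ideal.Quotient.mk P (MvPolynomial.C c)) = c
      have h5 : Ideal.Quotient.mk P (MvPolynomial.C c) =
          algebraMap C (MvPolynomial (Fin s) C ⧸ P) c := by
        rw [IsScalarTower.algebraMap_apply C (MvPolynomial (Fin s) C)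
          (MvPolynomial (Fin s) C ⧸ P)]
        rfl
      rw [h5]
      have h6 : algebraMap C (MvPolynomial (Fin s) C ⧸ P) c = eqv c := rfl
      rw [h6, RingEquiv.symm_apply_apply]
    · intro j
      rw [hχdef, RingHom.comp_apply, MvPolynomial.eval_X]
      rfl
  refine ⟨b, fun j => ?_⟩
  have hone : MvPolynomial.eval b (E C p s j - MvPolynomial.C (u j)) = 0 := by
    rw [← hχeval, hχdef, RingHom.comp_apply]
    have h7 : Ideal.Quotient.mk P (E C p s j - MvPolynomial.C (u j)) = 0 :=
      Ideal.Quotient.eq_zero_iff_mem.2 (hPfP j)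
    rw [h7, map_zero]
  rw [map_sub, MvPolynomial.eval_C] at hone
  exact sub_eq_zero.1 hone

end Existence


section Translate

variable {C : Type} [Field C] {p s : ℕ}

lemma eval_E_eq_coeff (b : Fin s → C) (j : Fin s) :
    MvPolynomial.eval b (E C p s j) = PowerSeries.coeff (R := C) (((j : ℕ) + 1) * p)
      ((1 + ∑ j : Fin s, PowerSeries.monomial (R := C) ((j : ℕ) + 1) (b j)) ^ p) := by
  have hmapW : PowerSeries.map (MvPolynomial.eval b : MvPolynomial (Fin s) C →+* C) (W C s) =
      1 + ∑ j : Fin s, PowerSeries.monomial (R := C) ((j : ℕ) + 1) (b j) := by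
    refine PowerSeries.ext fun k => ?_
    rw [PowerSeries.coeff_map, coeff_W, map_add, PowerSeries.coeff_one, coeff_sum_monomial b]
    by_cases h : 1 ≤ k ∧ k ≤ s
    · rw [dif_pos h, dif_pos h, if_neg (by omega), zero_add]
      exact MvPolynomial.eval_X _
    · rw [dif_neg h, dif_neg h]
      by_cases h0 : k = 0
      · rw [if_pos h0, if_pos h0, add_zero]
        exact map_one _
      · rw [if_neg h0, if_neg h0, add_zero]
        exact map_zero _
  rw [E, ← PowerSeries.coeff_map, map_pow, hmapW]

end Translate

end Stmt4Aux

end StmtAux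

open Stmt4Aux in
/-- Let `U = 1 + Σ_{i ≥ 1} a_i T^i ∈ C[[T]]` have all coefficients in the valuation ring
`R = {x : C | 0 ≤ v x}`, and let `s ≥ 0`.  Then the set of tuples `(b_1, …, b_s) ∈ C^s` such
that the coefficient of `T^(i*p)` in `U - (1 + Σ_{i=1}^s b_i T^i)^p` vanishes for every
`i = 1, …, s` is nonempty and finite; indeed it has at most `p^s` elements. -/
theorem stmt4 (p : ℕ) (hp : p.Prime)
    (C : Type) [Field C] [IsAlgClosed C] [CharZero C]
    (v : AddValuation C (WithTop ℝ)) (hvp : v (p : C) = 1)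
    (U : PowerSeries C) (hU0 : PowerSeries.coeff (R := C) 0 U = 1)
    (hUR : ∀ i : ℕ, (0 : WithTop ℝ) ≤ v (PowerSeries.coeff (R := C) i U))
    (s : ℕ)
    (S : Set (Fin s → C))
    (hS : S = {b : Fin s → C | ∀ i ∈ Finset.Icc 1 s,
      PowerSeries.coeff (R := C) (i * p)
        (U - (1 + ∑ j : Fin s, PowerSeries.monomial (R := C) ((j : ℕ) + 1) (b j)) ^ p) = 0}) :
    S.Nonempty ∧ S.Finite ∧ Nat.card ↥S ≤ p ^ s := by
  classical
  have hp1 : 1 ≤ p := hp.one_lt.le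
  set u : Fin s → C := fun j => PowerSeries.coeff (R := C) (((j : ℕ) + 1) * p) U with hu
  have hSchar : ∀ b : Fin s → C, b ∈ S ↔
      ∀ j : Fin s, MvPolynomial.eval b (E C p s j) = u j := by
    intro b
    rw [hS]
    simp only [Set.mem_setOf_eq]
    constructor
    · intro h j
      have hj := h ((j : ℕ) + 1) (Finset.mem_Icc.2 ⟨by omega, by have := j.isLt; omega⟩)
      rw [map_sub] at hj
      rw [eval_E_eq_coeff, hu]
      exact (sub_eq_zero.1 hj).symm
    · intro h i hi
      rw [Finset.mem_Icc] at hi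
      have h2 := h ⟨i - 1, by omega⟩
      rw [eval_E_eq_coeff, hu] at h2
      have hip : (((⟨i - 1, by omega⟩ : Fin s) : ℕ) + 1) = i := by simp; omega
      rw [map_sub, sub_eq_zero]
      have h3 : PowerSeries.coeff (R := C) (i * p) U =
          PowerSeries.coeff (R := C) (i * p)
            ((1 + ∑ j : Fin s, PowerSeries.monomial (R := C) ((j : ℕ) + 1) (b j)) ^ p) := by
        simpa [hip] using h2.symm
      exact h3
  refine ⟨?_, ?_⟩
  · obtain ⟨b, hb⟩ := exists_sol hp1 u
    exact ⟨b, (hSchar b).2 hb⟩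
  have hfin : S.Finite := by
    by_contra hinf
    obtain ⟨T, hTsub, hTcard⟩ :=
      Set.Infinite.exists_subset_card_eq (hinf : S.Infinite) (p ^ s + 1)
    have hle := card_le_of_sol hp1 u T (fun b hb j => (hSchar b).1 (hTsub hb) j)
    omega
  refine ⟨hfin, ?_⟩
  have hle := card_le_of_sol hp1 u hfin.toFinset
    (fun b hb j => (hSchar b).1 (hfin.mem_toFinset.1 hb) j)
  have hcard : Nat.card ↥S = hfin.toFinset.card := by
    rw [Nat.card_coe_set_eq, Set.ncard_eq_toFinset_card _ hfin]
  omega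
end

section
/- Let U = 1 + Σ_{i≥1} a_i T^i ∈ C[[T]] be a formal power series with all coefficients a_i ∈ R, and let r > 0 be a real number. Then there exists a polynomial H = 1 + Σ_{i=1}^s b_i T^i with all b_i ∈ R such that for every index n ≥ 1 divisible by p, the n-th coefficient c_n of U − H^p satisfies v(c_n) + n·r ≥ p/(p−1). -/
open PowerSeries Finset

section Aux

variable {K : Type} [Field K] (v : AddValuation K (WithTop ℝ))

lemma aux_vnat (n : ℕ) : (0 : WithTop ℝ) ≤ v (n : K) := by
  induction n with
  | zero => simp [v.map_zero]
  | succ k ih =>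
      push_cast
      exact v.map_le_add ih (le_of_eq v.map_one.symm)

lemma aux_vmul {a b : WithTop ℝ} {f g : PowerSeries K}
    (hf : ∀ i, a ≤ v (PowerSeries.coeff i f))
    (hg : ∀ i, b ≤ v (PowerSeries.coeff i g)) (n : ℕ) :
    a + b ≤ v (PowerSeries.coeff n (f * g)) := by
  rw [PowerSeries.coeff_mul]
  refine v.map_le_sum fun ij _ => ?_
  rw [v.map_mul]
  exact add_le_add (hf _) (hg _)

lemma aux_vpow0 {f : PowerSeries K} (hf : ∀ i, (0 : WithTop ℝ) ≤ v (PowerSeries.coeff i f))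
    (k n : ℕ) : (0 : WithTop ℝ) ≤ v (PowerSeries.coeff n (f ^ k)) := by
  induction k generalizing n with
  | zero =>
      rw [pow_zero, PowerSeries.coeff_one]
      split <;> simp [v.map_one, v.map_zero]
  | succ k ih =>
      rw [pow_succ]
      simpa using aux_vmul v (a := 0) (b := 0) ih hf n

lemma aux_vpow {a : WithTop ℝ} (ha : 0 ≤ a) {f : PowerSeries K}
    (hf : ∀ i, a ≤ v (PowerSeries.coeff i f)) :
    ∀ k, 1 ≤ k → ∀ n, a ≤ v (PowerSeries.coeff n (f ^ k)) := by
  intro k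
  induction k with
  | zero => omega
  | succ k ih =>
      intro _ n
      rcases Nat.eq_zero_or_pos k with h | hk
      · subst h; rw [pow_one]; exact hf n
      · rw [pow_succ]
        calc a = 0 + a := (zero_add a).symm
          _ ≤ a + a := add_le_add_left ha a
          _ ≤ _ := aux_vmul v (ih hk) hf n

end Aux

section Aux2

variable {K : Type} [Field K] (v : AddValuation K (WithTop ℝ))

lemma aux_vC (m : ℕ) (n : ℕ) :
    (0 : WithTop ℝ) ≤ v (PowerSeries.coeff n ((m : ℕ) : PowerSeries K)) := by
  have h : ((m : ℕ) : PowerSeries K) = PowerSeries.C ((m : ℕ) : K) :=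
    (map_natCast (PowerSeries.C (R := K)) m).symm
  rw [h, PowerSeries.coeff_C]
  split
  · exact aux_vnat v m
  · simp [v.map_zero]

lemma aux_vD {δ : ℝ} {d : ℕ → K} (hd : ∀ m, (δ : WithTop ℝ) ≤ v (d m)) (F : Finset ℕ)
    (n : ℕ) : (δ : WithTop ℝ) ≤ v (PowerSeries.coeff n
      (∑ m ∈ F, PowerSeries.monomial m (d m))) := by
  rw [map_sum]
  refine v.map_le_sum fun m _ => ?_
  rw [PowerSeries.coeff_monomial]
  split
  · exact hd _
  · simp [v.map_zero]

lemma aux_vH {b : ℕ → K} (hb : ∀ i, (0 : WithTop ℝ) ≤ v (b i)) (F : Finset ℕ) (n : ℕ) :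
    (0 : WithTop ℝ) ≤ v (PowerSeries.coeff n
      (1 + ∑ j ∈ F, PowerSeries.monomial j (b j))) := by
  rw [map_add]
  refine v.map_le_add ?_ ?_
  · rw [PowerSeries.coeff_one]; split <;> simp [v.map_one, v.map_zero]
  · have : ((0 : ℝ) : WithTop ℝ) = (0 : WithTop ℝ) := by norm_cast
    rw [← this]
    exact aux_vD v (fun m => by rw [this]; exact hb m) F n

lemma aux_monomial_pow (m : ℕ) (c : K) (k : ℕ) :
    (PowerSeries.monomial m c) ^ k = PowerSeries.monomial (k * m) (c ^ k) := by
  have h : PowerSeries.monomial m c = PowerSeries.C c * PowerSeries.X ^ m := by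
    ext j
    rw [PowerSeries.coeff_monomial, PowerSeries.coeff_C_mul, PowerSeries.coeff_X_pow]
    split <;> simp_all
  rw [h, mul_pow, ← map_pow, ← pow_mul]
  have h2 : PowerSeries.monomial (k * m) (c ^ k)
      = PowerSeries.C (c ^ k) * PowerSeries.X ^ (m * k) := by
    ext j
    rw [PowerSeries.coeff_monomial, PowerSeries.coeff_C_mul, PowerSeries.coeff_X_pow]
    rw [Nat.mul_comm k m]
    split <;> simp_all
  rw [h2]

end Aux2

section Aux3

variable {K : Type} [Field K] (v : AddValuation K (WithTop ℝ))

lemma aux_vroot {p : ℕ} (hp : 0 < p) {z : K} {β : ℝ}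
    (h : (β : WithTop ℝ) ≤ v (z ^ p)) : ((β / p : ℝ) : WithTop ℝ) ≤ v z := by
  rw [v.map_pow] at h
  cases hz : v z with
  | top => exact le_top
  | coe x =>
      rw [hz, ← WithTop.coe_nsmul, WithTop.coe_le_coe] at h
      rw [WithTop.coe_le_coe]
      rw [nsmul_eq_mul] at h
      rw [div_le_iff₀ (by exact_mod_cast hp : (0:ℝ) < p)]
      linarith

lemma aux_vpE {p : ℕ} (hp : p.Prime) (hvp : v (p : K) = 1) {δ : ℝ} (hδ : 0 ≤ δ)
    {f g : PowerSeries K} (hf : ∀ i, (0 : WithTop ℝ) ≤ v (PowerSeries.coeff i f))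
    (hg : ∀ i, (δ : WithTop ℝ) ≤ v (PowerSeries.coeff i g)) (n : ℕ) :
    ((1 + δ : ℝ) : WithTop ℝ) ≤ v (PowerSeries.coeff n ((p : PowerSeries K) *
      ∑ k ∈ Finset.Ioo 0 p, f ^ k * g ^ (p - k) * ((p.choose k / p : ℕ) : PowerSeries K))) := by
  have hcast : ((p : ℕ) : PowerSeries K) = PowerSeries.C ((p : ℕ) : K) :=
    (map_natCast (PowerSeries.C (R := K)) p).symm
  rw [hcast, PowerSeries.coeff_C_mul, v.map_mul, hvp]
  have hδ0 : (0 : WithTop ℝ) ≤ (δ : WithTop ℝ) := by exact_mod_cast hδ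
  have hsum : (δ : WithTop ℝ) ≤ v (PowerSeries.coeff n
      (∑ k ∈ Finset.Ioo 0 p, f ^ k * g ^ (p - k) * ((p.choose k / p : ℕ) : PowerSeries K))) := by
    rw [map_sum]
    refine v.map_le_sum fun k hk => ?_
    rw [Finset.mem_Ioo] at hk
    have h1 : ∀ i, (δ : WithTop ℝ) ≤ v (PowerSeries.coeff i (f ^ k * g ^ (p - k))) := by
      intro i
      have := aux_vmul v (a := (0 : WithTop ℝ)) (b := (δ : WithTop ℝ))
        (aux_vpow0 v hf k) (aux_vpow v hδ0 hg (p - k) (by omega)) i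
      simpa using this
    have := aux_vmul v (a := (δ : WithTop ℝ)) (b := (0 : WithTop ℝ))
      (g := ((p.choose k / p : ℕ) : PowerSeries K)) h1 (aux_vC v _) n
    simpa using this
  calc ((1 + δ : ℝ) : WithTop ℝ) = 1 + (δ : WithTop ℝ) := by push_cast; ring_nf
    _ ≤ _ := add_le_add_right hsum 1

end Aux3

section Aux4

variable {K : Type} [Field K] (v : AddValuation K (WithTop ℝ))

lemma aux_cross {p : ℕ} (hp : p.Prime) (hvp : v (p : K) = 1) {δ : ℝ} (hδ : 0 ≤ δ)
    (d : ℕ → K) (hd : ∀ m, (δ : WithTop ℝ) ≤ v (d m)) (F : Finset ℕ) (n : ℕ) :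
    ((1 + δ : ℝ) : WithTop ℝ) ≤ v (PowerSeries.coeff n
      ((∑ m ∈ F, PowerSeries.monomial m (d m)) ^ p
        - ∑ m ∈ F, PowerSeries.monomial (p * m) (d m ^ p))) := by
  classical
  induction F using Finset.induction_on with
  | empty =>
      simp only [Finset.sum_empty, zero_pow hp.ne_zero, sub_zero, map_zero, v.map_zero]
      exact le_top
  | @insert a s ha ih =>
      rw [Finset.sum_insert ha, Finset.sum_insert ha]
      set X := PowerSeries.monomial a (d a) with hX
      set D := ∑ m ∈ s, PowerSeries.monomial m (d m) with hD
      set Frob := ∑ m ∈ s, PowerSeries.monomial (p * m) (d m ^ p) with hFrob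
      have hXp : X ^ p = PowerSeries.monomial (p * a) (d a ^ p) := aux_monomial_pow a (d a) p
      have hpow := add_pow_prime_eq' hp X D
      have hkey : (X + D) ^ p - (PowerSeries.monomial (p * a) (d a ^ p) + Frob)
          = (D ^ p - Frob) + (p : PowerSeries K) *
            ∑ k ∈ Finset.Ioo 0 p, X ^ k * D ^ (p - k) * ((p.choose k / p : ℕ) : PowerSeries K) := by
        rw [hpow, ← hXp]; ring
      rw [hkey, map_add]
      refine v.map_le_add ih ?_
      refine aux_vpE v hp hvp hδ (fun i => ?_) (aux_vD v hd s) n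
      rw [hX, PowerSeries.coeff_monomial]
      split
      · exact le_trans (by exact_mod_cast hδ) (hd a)
      · simp [v.map_zero]

end Aux4

section Aux5

variable {K : Type} [Field K] [IsAlgClosed K] (v : AddValuation K (WithTop ℝ))

lemma aux_step {p : ℕ} (hp : p.Prime) (hvp : v (p : K) = 1)
    (U : PowerSeries K) (hUR : ∀ i, (0 : WithTop ℝ) ≤ v (PowerSeries.coeff i U))
    (M : ℕ) {β : ℝ} (hβ : 0 ≤ β) (b : ℕ → K) (hb : ∀ i, (0 : WithTop ℝ) ≤ v (b i))
    (hc : ∀ m ∈ Finset.Icc 1 M, (β : WithTop ℝ) ≤ v (PowerSeries.coeff (p * m)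
      (U - (1 + ∑ j ∈ Finset.Icc 1 M, PowerSeries.monomial j (b j)) ^ p))) :
    ∃ b' : ℕ → K, (∀ i, (0 : WithTop ℝ) ≤ v (b' i)) ∧
      ∀ m ∈ Finset.Icc 1 M, ((1 + β / p : ℝ) : WithTop ℝ) ≤ v (PowerSeries.coeff (p * m)
        (U - (1 + ∑ j ∈ Finset.Icc 1 M, PowerSeries.monomial j (b' j)) ^ p)) := by
  classical
  set Hb := 1 + ∑ j ∈ Finset.Icc 1 M, PowerSeries.monomial j (b j) with hHb
  set c := U - Hb ^ p with hcdef
  have hroot : ∀ m : ℕ, ∃ z : K, z ^ p = PowerSeries.coeff (p * m) c :=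
    fun m => IsAlgClosed.exists_pow_nat_eq _ hp.pos
  set d : ℕ → K := fun m => if m ∈ Finset.Icc 1 M then (hroot m).choose else 0 with hddef
  have hdval : ∀ m, ((β / p : ℝ) : WithTop ℝ) ≤ v (d m) := by
    intro m
    rw [hddef]
    by_cases h : m ∈ Finset.Icc 1 M
    · simp only [h, if_true]
      refine aux_vroot v hp.pos ?_
      rw [(hroot m).choose_spec]
      exact hc m h
    · simp [h, v.map_zero]
  have hdval0 : ∀ m, (0 : WithTop ℝ) ≤ v (d m) := by
    intro m
    refine le_trans ?_ (hdval m)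
    exact_mod_cast div_nonneg hβ (le_of_lt (by exact_mod_cast hp.pos : (0:ℝ) < p))
  refine ⟨fun i => b i + d i, fun i => v.map_le_add (hb i) (hdval0 i), ?_⟩
  intro m hm
  set D := ∑ j ∈ Finset.Icc 1 M, PowerSeries.monomial j (d j) with hDdef
  set Frob := ∑ j ∈ Finset.Icc 1 M, PowerSeries.monomial (p * j) (d j ^ p) with hFrobdef
  have hH' : (1 + ∑ j ∈ Finset.Icc 1 M, PowerSeries.monomial j ((fun i => b i + d i) j))
      = Hb + D := by
    simp only [map_add, Finset.sum_add_distrib, hHb, hDdef]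
    ring
  rw [hH']
  have hpow := add_pow_prime_eq' hp Hb D
  have hkey : U - (Hb + D) ^ p = (c - Frob) - ((D ^ p - Frob) + (p : PowerSeries K) *
      ∑ k ∈ Finset.Ioo 0 p, Hb ^ k * D ^ (p - k) * ((p.choose k / p : ℕ) : PowerSeries K)) := by
    rw [hpow, hcdef]; ring
  rw [hkey]
  have hA : PowerSeries.coeff (p * m) (c - Frob) = 0 := by
    have hFc : PowerSeries.coeff (p * m) Frob = d m ^ p := by
      rw [hFrobdef, map_sum]
      rw [Finset.sum_eq_single m]
      · rw [PowerSeries.coeff_monomial, if_pos rfl]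
      · intro j hj hjm
        rw [PowerSeries.coeff_monomial, if_neg]
        intro hEq
        exact hjm (Nat.eq_of_mul_eq_mul_left hp.pos hEq).symm
      · intro h; exact absurd hm h
    have hdm : d m ^ p = PowerSeries.coeff (p * m) c := by
      rw [hddef]
      simp only [hm, if_true]
      exact (hroot m).choose_spec
    rw [map_sub, hFc, hdm, sub_self]
  rw [map_sub, hA, zero_sub, v.map_neg, map_add]
  refine v.map_le_add ?_ ?_
  · exact aux_cross v hp hvp (div_nonneg hβ (le_of_lt (by exact_mod_cast hp.pos))) d hdval _ _
  · exact aux_vpE v hp hvp (div_nonneg hβ (le_of_lt (by exact_mod_cast hp.pos)))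
      (aux_vH v hb _) (aux_vD v hdval _) _

end Aux5

/-- Let `U = 1 + Σ_{i ≥ 1} a_i T^i ∈ C[[T]]` have all coefficients in the valuation ring
`R = {x : C | 0 ≤ v x}`, and let `r > 0` be a real number.  Then there exists a polynomial
`H = 1 + Σ_{i=1}^s b_i T^i` with all `b_i ∈ R` such that for every index `n ≥ 1` divisible by
`p`, the `n`-th coefficient `c_n` of `U - H^p` satisfies `v (c_n) + n * r ≥ p / (p - 1)`. -/
theorem stmt5 (p : ℕ) (hp : p.Prime)
    (C : Type) [Field C] [IsAlgClosed C] [CharZero C]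
    (v : AddValuation C (WithTop ℝ)) (hvp : v (p : C) = 1)
    (U : PowerSeries C) (hU0 : PowerSeries.coeff 0 U = 1)
    (hUR : ∀ i : ℕ, (0 : WithTop ℝ) ≤ v (PowerSeries.coeff i U))
    (r : ℝ) (hr : 0 < r) :
    ∃ s : ℕ, ∃ b : ℕ → C, (∀ i ∈ Finset.Icc 1 s, (0 : WithTop ℝ) ≤ v (b i)) ∧
      ∀ n : ℕ, 1 ≤ n → p ∣ n →
        (((p : ℝ) / ((p : ℝ) - 1) : ℝ) : WithTop ℝ) ≤
          v (PowerSeries.coeff n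
              (U - (1 + ∑ j ∈ Finset.Icc 1 s, PowerSeries.monomial j (b j)) ^ p)) +
            (((n : ℝ) * r : ℝ) : WithTop ℝ) := by
  classical
  have hp2 : (2 : ℝ) ≤ (p : ℝ) := by exact_mod_cast hp.two_le
  have hp0 : (0 : ℝ) < (p : ℝ) := by linarith
  have hp1 : (1 : ℝ) < (p : ℝ) := by linarith
  have hpm1 : (0 : ℝ) < (p : ℝ) - 1 := by linarith
  set L : ℝ := (p : ℝ) / ((p : ℝ) - 1) with hL
  have hLpos : 0 < L := div_pos hp0 hpm1
  have hLfix : 1 + L / p = L := by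
    rw [hL]; field_simp; ring
  set M : ℕ := ⌈L / ((p : ℝ) * r)⌉₊ with hM
  have hMge : L / ((p : ℝ) * r) ≤ (M : ℝ) := Nat.le_ceil _
  have hMr : L ≤ (p : ℝ) * (M : ℝ) * r := by
    rw [div_le_iff₀ (by positivity)] at hMge
    nlinarith
  -- the iterative construction
  have key : ∀ t : ℕ, ∃ b : ℕ → C, (∀ i, (0 : WithTop ℝ) ≤ v (b i)) ∧
      ∀ m ∈ Finset.Icc 1 M, ((L - L / (p : ℝ) ^ t : ℝ) : WithTop ℝ) ≤
        v (PowerSeries.coeff (p * m)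
          (U - (1 + ∑ j ∈ Finset.Icc 1 M, PowerSeries.monomial j (b j)) ^ p)) := by
    intro t
    induction t with
    | zero =>
        refine ⟨fun _ => 0, fun i => by simp [v.map_zero], ?_⟩
        intro m _
        have h0 : ((L - L / (p : ℝ) ^ 0 : ℝ) : WithTop ℝ) = ((0 : ℝ) : WithTop ℝ) := by
          norm_num
        rw [h0]
        rw [map_sub]
        refine v.map_le_sub (hUR _) ?_
        exact aux_vpow0 v (aux_vH v (fun i => by simp [v.map_zero]) _) p _
    | succ t ih =>
        obtain ⟨b, hb, hbd⟩ := ih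
        have hβ : 0 ≤ L - L / (p : ℝ) ^ t := by
          have h1 : L / (p : ℝ) ^ t ≤ L / 1 := by
            apply div_le_div_of_nonneg_left (le_of_lt hLpos) one_pos
            exact one_le_pow₀ (le_of_lt hp1)
          simp at h1
          linarith
        obtain ⟨b', hb', hbd'⟩ := aux_step v hp hvp U hUR M hβ b hb hbd
        refine ⟨b', hb', fun m hm => ?_⟩
        have harith : (1 + (L - L / (p : ℝ) ^ t) / p : ℝ) = L - L / (p : ℝ) ^ (t + 1) := by
          have : L / (p:ℝ)^(t+1) = (L / (p:ℝ)^t)/p := by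
            rw [pow_succ]; exact (div_div _ _ _).symm
          rw [this, sub_div] at *
          linarith [hLfix]
        rw [← harith]
        exact hbd' m hm
  -- choose the number of iterations
  obtain ⟨T, hT⟩ := pow_unbounded_of_one_lt (L / ((p : ℝ) * r)) hp1
  have hTr : L - L / (p : ℝ) ^ T + (p : ℝ) * r ≥ L := by
    have hpT : (0 : ℝ) < (p : ℝ) ^ T := by positivity
    rw [div_lt_iff₀ (by positivity)] at hT
    have : L / (p : ℝ) ^ T ≤ (p : ℝ) * r := by
      rw [div_le_iff₀ hpT]
      nlinarith
    linarith
  obtain ⟨b, hb, hbd⟩ := key T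
  refine ⟨M, b, fun i _ => hb i, ?_⟩
  intro n hn hdvd
  obtain ⟨m, rfl⟩ := hdvd
  have hm1 : 1 ≤ m := by
    rcases Nat.eq_zero_or_pos m with h | h
    · subst h; simp at hn
    · exact h
  have hfinal : ∀ γ : ℝ, (γ : WithTop ℝ) ≤ v (PowerSeries.coeff (p * m)
      (U - (1 + ∑ j ∈ Finset.Icc 1 M, PowerSeries.monomial j (b j)) ^ p)) →
      L ≤ γ + ((p * m : ℕ) : ℝ) * r →
      ((L : ℝ) : WithTop ℝ) ≤ v (PowerSeries.coeff (p * m)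
        (U - (1 + ∑ j ∈ Finset.Icc 1 M, PowerSeries.monomial j (b j)) ^ p)) +
        ((((p * m : ℕ) : ℝ) * r : ℝ) : WithTop ℝ) := by
    intro γ hγ harith
    calc ((L : ℝ) : WithTop ℝ) ≤ ((γ + ((p * m : ℕ) : ℝ) * r : ℝ) : WithTop ℝ) := by
          exact_mod_cast harith
      _ = (γ : WithTop ℝ) + ((((p * m : ℕ) : ℝ) * r : ℝ) : WithTop ℝ) := by push_cast; rfl
      _ ≤ _ := add_le_add_left hγ _
  have hnm : ((p * m : ℕ) : ℝ) = (p : ℝ) * (m : ℝ) := by push_cast; ring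
  by_cases hmM : m ≤ M
  · refine hfinal _ (hbd m (Finset.mem_Icc.mpr ⟨hm1, hmM⟩)) ?_
    have hmr : (p : ℝ) * r ≤ ((p * m : ℕ) : ℝ) * r := by
      rw [hnm]
      have h1m : (1 : ℝ) ≤ (m : ℝ) := by exact_mod_cast hm1
      have := mul_le_mul_of_nonneg_right
        (mul_le_mul_of_nonneg_left h1m (le_of_lt hp0)) (le_of_lt hr)
      calc (p:ℝ) * r = (p:ℝ) * 1 * r := by ring
        _ ≤ (p:ℝ) * (m:ℝ) * r := by nlinarith
    linarith
  · have h0 : ((0 : ℝ) : WithTop ℝ) ≤ v (PowerSeries.coeff (p * m)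
        (U - (1 + ∑ j ∈ Finset.Icc 1 M, PowerSeries.monomial j (b j)) ^ p)) := by
      have : ((0 : ℝ) : WithTop ℝ) = (0 : WithTop ℝ) := by norm_cast
      rw [this, map_sub]
      exact v.map_le_sub (hUR _) (aux_vpow0 v (aux_vH v hb _) p _)
    refine hfinal _ h0 ?_
    have hmM' : (M : ℝ) ≤ (m : ℝ) := by
      exact_mod_cast le_of_lt (Nat.lt_of_not_le hmM)
    have : (p : ℝ) * (M : ℝ) * r ≤ ((p * m : ℕ) : ℝ) * r := by
      rw [hnm]
      have := mul_le_mul_of_nonneg_left hmM' (le_of_lt hp0)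
      exact mul_le_mul_of_nonneg_right this (le_of_lt hr)
    linarith
end

section
/- Let r ≥ 0 be a real number. Let H = Σ_{i≥0} h_i T^i ∈ C[[T]] satisfy v(h_i) + i·r ≥ 0 for all i ≥ 0, and let f = Σ_{i≥1} f_i T^i ∈ T·C[[T]] be such that β := v_r(f) satisfies 0 ≤ β < ∞. Then v_r( (H+f)^p − H^p − Σ_{i≥1} f_i^p T^{ip} ) ≥ 1 + β. -/
open PowerSeries Finset

section Aux

variable {C : Type} [Field C] (v : AddValuation C (WithTop ℝ)) (r : ℝ)

/-- `a ≤ x + c` iff `a - c ≤ x` in `WithTop ℝ` with real `a, c`. -/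
lemma wt_le_add_iff (a c : ℝ) (x : WithTop ℝ) :
    (a : WithTop ℝ) ≤ x + (c : WithTop ℝ) ↔ ((a - c : ℝ) : WithTop ℝ) ≤ x := by
  induction x using WithTop.recTopCoe with
  | top => simp
  | coe b =>
    rw [← WithTop.coe_add, WithTop.coe_le_coe, WithTop.coe_le_coe]
    constructor <;> intro h <;> linarith

/-- Gauss-valuation lower bound predicate. -/
def GoodPS (α : ℝ) (g : PowerSeries C) : Prop :=
  ∀ m : ℕ, ((α - (m : ℝ) * r : ℝ) : WithTop ℝ) ≤ v (PowerSeries.coeff m g)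

lemma goodPS_mono {α α' : ℝ} (h : α' ≤ α) {g : PowerSeries C} (hg : GoodPS v r α g) :
    GoodPS v r α' g := fun m =>
  le_trans (by exact_mod_cast (by linarith : α' - (m:ℝ)*r ≤ α - (m:ℝ)*r)) (hg m)

lemma goodPS_zero (α : ℝ) : GoodPS v r α (0 : PowerSeries C) := by
  intro m; simp [v.map_zero]

lemma goodPS_add {α : ℝ} {g h : PowerSeries C} (hg : GoodPS v r α g) (hh : GoodPS v r α h) :
    GoodPS v r α (g + h) := by
  intro m
  rw [map_add]
  exact v.map_le_add (hg m) (hh m)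

lemma goodPS_sub {α : ℝ} {g h : PowerSeries C} (hg : GoodPS v r α g) (hh : GoodPS v r α h) :
    GoodPS v r α (g - h) := by
  intro m
  rw [map_sub]
  exact v.map_le_sub (hg m) (hh m)

lemma goodPS_sum {α : ℝ} {ι : Type*} {s : Finset ι} {g : ι → PowerSeries C}
    (hg : ∀ i ∈ s, GoodPS v r α (g i)) : GoodPS v r α (∑ i ∈ s, g i) := by
  intro m
  rw [map_sum]
  exact v.map_le_sum fun i hi => hg i hi m

lemma goodPS_mul {α α' : ℝ} {g h : PowerSeries C} (hg : GoodPS v r α g) (hh : GoodPS v r α' h) :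
    GoodPS v r (α + α') (g * h) := by
  intro m
  rw [PowerSeries.coeff_mul]
  refine v.map_le_sum fun x hx => ?_
  rw [v.map_mul]
  have hxm : x.1 + x.2 = m := Finset.HasAntidiagonal.mem_antidiagonal.mp hx
  have h1 := hg x.1
  have h2 := hh x.2
  have : ((α + α' - (m:ℝ)*r : ℝ) : WithTop ℝ)
      = ((α - (x.1:ℝ)*r : ℝ) : WithTop ℝ) + ((α' - (x.2:ℝ)*r : ℝ) : WithTop ℝ) := by
    rw [← WithTop.coe_add, WithTop.coe_eq_coe]
    have : (m : ℝ) = (x.1 : ℝ) + (x.2 : ℝ) := by exact_mod_cast hxm.symm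
    rw [this]; ring
  rw [this]
  exact add_le_add h1 h2

lemma goodPS_one (hr : 0 ≤ r) : GoodPS v r 0 (1 : PowerSeries C) := by
  intro m
  rcases eq_or_ne m 0 with h | h
  · subst h; simp [PowerSeries.coeff_one, v.map_one]
  · simp only [PowerSeries.coeff_one, h, if_false, v.map_zero]
    exact le_top

lemma goodPS_pow (hr : 0 ≤ r) {α : ℝ} {g : PowerSeries C} (hg : GoodPS v r α g) (k : ℕ) :
    GoodPS v r ((k : ℝ) * α) (g ^ k) := by
  induction k with
  | zero => simpa using goodPS_one v r hr
  | succ k ih =>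
      have := goodPS_mul v r ih hg
      rw [pow_succ]
      refine goodPS_mono v r (le_of_eq ?_) this
      push_cast; ring

lemma goodPS_monomial {α : ℝ} (a : ℕ) (c : C)
    (h : ((α - (a : ℝ) * r : ℝ) : WithTop ℝ) ≤ v c) :
    GoodPS v r α (PowerSeries.monomial a c) := by
  intro m
  rw [PowerSeries.coeff_monomial]
  rcases eq_or_ne m a with hma | hma
  · subst hma; simpa using h
  · simp [hma, v.map_zero]

lemma v_natCast_nonneg (m : ℕ) : (0 : WithTop ℝ) ≤ v (m : C) := by
  induction m with
  | zero => simp [v.map_zero]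
  | succ k ih =>
      push_cast
      refine le_trans (le_min ih ?_) (v.map_add _ _)
      simp [v.map_one]

lemma monomial_eq_C_mul_X (n : ℕ) (a : C) :
    PowerSeries.monomial n a = PowerSeries.C a * (PowerSeries.X : PowerSeries C) ^ n := by
  ext m
  simp [PowerSeries.coeff_monomial, PowerSeries.coeff_X_pow, mul_ite, mul_one, mul_zero]

lemma monomial_pow_eq (a : ℕ) (c : C) (k : ℕ) :
    (PowerSeries.monomial a c) ^ k = PowerSeries.monomial (a * k) (c ^ k) := by
  rw [monomial_eq_C_mul_X, mul_pow, ← map_pow, ← pow_mul, mul_comm a k, monomial_eq_C_mul_X,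
    mul_comm k a]

/-- Coefficients up to `n` of a product depend only on coefficients up to `n`. -/
lemma coeff_mul_congr {a a' b b' : PowerSeries C} {n : ℕ}
    (ha : ∀ m ≤ n, PowerSeries.coeff m a = PowerSeries.coeff m a')
    (hb : ∀ m ≤ n, PowerSeries.coeff m b = PowerSeries.coeff m b') :
    ∀ m ≤ n, PowerSeries.coeff m (a * b) = PowerSeries.coeff m (a' * b') := by
  intro m hm
  rw [PowerSeries.coeff_mul, PowerSeries.coeff_mul]
  refine Finset.sum_congr rfl fun x hx => ?_
  have hxm : x.1 + x.2 = m := Finset.HasAntidiagonal.mem_antidiagonal.mp hx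
  rw [ha x.1 (le_trans (by omega) hm), hb x.2 (le_trans (by omega) hm)]

lemma coeff_pow_congr {a b : PowerSeries C} {n : ℕ}
    (h : ∀ m ≤ n, PowerSeries.coeff m a = PowerSeries.coeff m b) (k : ℕ) :
    ∀ m ≤ n, PowerSeries.coeff m (a ^ k) = PowerSeries.coeff m (b ^ k) := by
  induction k with
  | zero => intro m _; simp
  | succ k ih =>
      intro m hm
      rw [pow_succ, pow_succ]
      exact coeff_mul_congr ih h m hm

end Aux

/-- Let `r ≥ 0`.  Let `H = Σ_{i ≥ 0} h_i T^i ∈ C[[T]]` satisfy `v (h_i) + i * r ≥ 0` for all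
`i`, and let `f = Σ_{i ≥ 1} f_i T^i ∈ T·C[[T]]` be such that `β := v_r (f)` (the Gauss valuation
`inf_i (v (f_i) + i * r)`, expressed below as a lower bound together with an approximation
property) satisfies `0 ≤ β < ∞`.  Then
`v_r ((H + f)^p - H^p - Σ_{i ≥ 1} f_i^p T^(i*p)) ≥ 1 + β`, i.e. every coefficient `c_n` of
the latter series satisfies `v (c_n) + n * r ≥ 1 + β`. -/
theorem stmt6 (p : ℕ) (hp : p.Prime)
    (C : Type) [Field C] [IsAlgClosed C] [CharZero C]
    (v : AddValuation C (WithTop ℝ)) (hvp : v (p : C) = 1)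
    (r : ℝ) (hr : 0 ≤ r)
    (H : PowerSeries C)
    (hH : ∀ i : ℕ, (0 : WithTop ℝ) ≤ v (PowerSeries.coeff i H) + (((i : ℝ) * r : ℝ) : WithTop ℝ))
    (f : PowerSeries C) (hf0 : PowerSeries.coeff 0 f = 0)
    (β : ℝ) (hβ0 : 0 ≤ β)
    (hβlb : ∀ i : ℕ, ((β : ℝ) : WithTop ℝ) ≤
      v (PowerSeries.coeff i f) + (((i : ℝ) * r : ℝ) : WithTop ℝ))
    (hβglb : ∀ ε : ℝ, 0 < ε → ∃ i : ℕ,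
      v (PowerSeries.coeff i f) + (((i : ℝ) * r : ℝ) : WithTop ℝ) < ((β + ε : ℝ) : WithTop ℝ)) :
    ∀ n : ℕ,
      ((1 + β : ℝ) : WithTop ℝ) ≤
        v (PowerSeries.coeff n ((H + f) ^ p - H ^ p) -
            (if p ∣ n ∧ 0 < n then (PowerSeries.coeff (n / p) f) ^ p else 0)) +
          (((n : ℝ) * r : ℝ) : WithTop ℝ) := by
  have hp1 : 1 ≤ p := hp.one_lt.le
  -- Good facts
  have hGoodH : GoodPS v r 0 H := fun m => (wt_le_add_iff 0 _ _).mp (hH m)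
  have hGoodf : GoodPS v r β f := fun m => (wt_le_add_iff β _ _).mp (hβlb m)
  -- valuation of binomial coefficients
  have hchoose : ∀ k : ℕ, 0 < k → k < p → (1 : WithTop ℝ) ≤ v ((p.choose k : ℕ) : C) := by
    intro k hk hkp
    obtain ⟨m, hm⟩ := Nat.Prime.dvd_choose_self hp hk.ne' hkp
    rw [hm]
    push_cast
    rw [v.map_mul, hvp]
    exact le_add_of_nonneg_right (v_natCast_nonneg v m)
  have hGoodChoose : ∀ k : ℕ, 0 < k → k < p →
      GoodPS v r 1 ((p.choose k : PowerSeries C)) := by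
    intro k hk hkp
    have : ((p.choose k : ℕ) : PowerSeries C) = PowerSeries.monomial 0 ((p.choose k : ℕ) : C) := by
      rw [PowerSeries.monomial_zero_eq_C_apply, map_natCast]
    rw [this]
    refine goodPS_monomial v r 0 _ ?_
    simpa using hchoose k hk hkp
  -- binomial middle term bound, for any Good β pair
  have hMid : ∀ g h : PowerSeries C, GoodPS v r 0 g → GoodPS v r β h →
      GoodPS v r (1 + β)
        (∑ k ∈ Finset.Ioo 0 p, g ^ k * h ^ (p - k) * ((p.choose k : ℕ) : PowerSeries C)) := by
    intro g h hg hh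
    refine goodPS_sum v r fun k hk => ?_
    obtain ⟨hk0, hkp⟩ := Finset.mem_Ioo.mp hk
    have h1 : GoodPS v r ((k : ℝ) * 0) (g ^ k) := goodPS_pow v r hr hg k
    have h2 : GoodPS v r (((p - k : ℕ) : ℝ) * β) (h ^ (p - k)) := goodPS_pow v r hr hh (p - k)
    have h3 := goodPS_mul v r (goodPS_mul v r h1 h2) (hGoodChoose k hk0 hkp)
    refine goodPS_mono v r ?_ h3
    have hpk1 : (1 : ℝ) ≤ ((p - k : ℕ) : ℝ) := by
      have : 1 ≤ p - k := by omega
      exact_mod_cast this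
    nlinarith
  -- splitting (g+h)^p
  have hsplit : ∀ g h : PowerSeries C, (g + h) ^ p =
      h ^ p + (∑ k ∈ Finset.Ioo 0 p, g ^ k * h ^ (p - k) * ((p.choose k : ℕ) : PowerSeries C))
        + g ^ p := by
    intro g h
    rw [add_pow]
    have hmem : (0 : ℕ) ∈ Finset.range p := Finset.mem_range.mpr (by omega)
    have herase : (Finset.range p).erase 0 = Finset.Ioo 0 p := by
      ext i; simp only [Finset.mem_erase, Finset.mem_range, Finset.mem_Ioo]; omega
    rw [Finset.sum_range_succ, ← Finset.sum_erase_add _ _ hmem, herase]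
    simp [Nat.sub_self]
    ring
  -- the key finite-sum lemma
  have key : ∀ s : Finset ℕ,
      GoodPS v r (1 + β)
        ((∑ i ∈ s, PowerSeries.monomial i (PowerSeries.coeff i f)) ^ p
          - ∑ i ∈ s, PowerSeries.monomial (i * p) ((PowerSeries.coeff i f) ^ p)) := by
    intro s
    induction s using Finset.induction_on with
    | empty =>
        simp [zero_pow hp.ne_zero]
        exact goodPS_zero v r _
    | @insert a s ha ih =>
        rw [Finset.sum_insert ha, Finset.sum_insert ha]
        set M := PowerSeries.monomial a (PowerSeries.coeff a f) with hM
        set G := ∑ i ∈ s, PowerSeries.monomial i (PowerSeries.coeff i f) with hG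
        have hGoodM : GoodPS v r β M :=
          goodPS_monomial v r _ _ ((wt_le_add_iff β _ _).mp (hβlb a))
        have hGoodG : GoodPS v r β G := by
          refine goodPS_sum v r fun i _ => ?_
          exact goodPS_monomial v r _ _ ((wt_le_add_iff β _ _).mp (hβlb i))
        have hMp : M ^ p = PowerSeries.monomial (a * p) ((PowerSeries.coeff a f) ^ p) :=
          monomial_pow_eq a _ p
        have heq : (M + G) ^ p
            - (PowerSeries.monomial (a * p) ((PowerSeries.coeff a f) ^ p)
              + ∑ i ∈ s, PowerSeries.monomial (i * p) ((PowerSeries.coeff i f) ^ p))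
            = (∑ k ∈ Finset.Ioo 0 p, M ^ k * G ^ (p - k) * ((p.choose k : ℕ) : PowerSeries C))
              + ((∑ i ∈ s, PowerSeries.monomial i (PowerSeries.coeff i f)) ^ p
                - ∑ i ∈ s, PowerSeries.monomial (i * p) ((PowerSeries.coeff i f) ^ p)) := by
          rw [hsplit M G, ← hMp, ← hG]
          ring
        rw [heq]
        exact goodPS_add v r (hMid M G (goodPS_mono v r hβ0 hGoodM) hGoodG) ih
  -- now the main statement
  intro n
  rw [wt_le_add_iff]
  set s : Finset ℕ := Finset.range (n + 1) with hs
  set G := ∑ i ∈ s, PowerSeries.monomial i (PowerSeries.coeff i f) with hG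
  set Φ := ∑ i ∈ s, PowerSeries.monomial (i * p) ((PowerSeries.coeff i f) ^ p) with hΦ
  have hcoe : ∀ m ≤ n, PowerSeries.coeff m f = PowerSeries.coeff m G := by
    intro m hm
    rw [hG, map_sum]
    simp only [PowerSeries.coeff_monomial]
    rw [Finset.sum_ite_eq]
    simp [hs, Nat.lt_succ_of_le hm]
  have hpowc : PowerSeries.coeff n (f ^ p) = PowerSeries.coeff n (G ^ p) :=
    coeff_pow_congr hcoe p n le_rfl
  -- coefficient of Φ at n
  have hΦc : PowerSeries.coeff n Φ
      = (if p ∣ n ∧ 0 < n then (PowerSeries.coeff (n / p) f) ^ p else 0) := by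
    rw [hΦ, map_sum]
    simp only [PowerSeries.coeff_monomial]
    by_cases hn0 : n = 0
    · subst hn0
      simp [hs, hf0, zero_pow hp.ne_zero]
    · by_cases hdvd : p ∣ n
      · have hpos : 0 < n := Nat.pos_of_ne_zero hn0
        rw [if_pos ⟨hdvd, hpos⟩]
        have hnp : n / p ∈ s := by
          rw [hs, Finset.mem_range]
          have : n / p ≤ n := Nat.div_le_self n p
          omega
        rw [Finset.sum_eq_single (n / p)]
        · rw [if_pos (Nat.div_mul_cancel hdvd).symm]
        · intro i _ hi
          rw [if_neg]
          intro hni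
          apply hi
          rw [hni]
          exact (Nat.mul_div_cancel i hp.pos).symm
        · intro h; exact absurd hnp h
      · rw [if_neg (fun h => hdvd h.1)]
        refine Finset.sum_eq_zero fun i _ => ?_
        rw [if_neg]
        intro hni
        exact hdvd ⟨i, by rw [hni, Nat.mul_comm]⟩
  -- rewrite the target element
  have htarget : PowerSeries.coeff n ((H + f) ^ p - H ^ p) -
      (if p ∣ n ∧ 0 < n then (PowerSeries.coeff (n / p) f) ^ p else 0)
      = PowerSeries.coeff n
          (∑ k ∈ Finset.Ioo 0 p, H ^ k * f ^ (p - k) * ((p.choose k : ℕ) : PowerSeries C))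
        + PowerSeries.coeff n (G ^ p - Φ) := by
    rw [← hΦc, map_sub, map_sub, ← hpowc]
    have : (H + f) ^ p = f ^ p
        + (∑ k ∈ Finset.Ioo 0 p, H ^ k * f ^ (p - k) * ((p.choose k : ℕ) : PowerSeries C))
        + H ^ p := hsplit H f
    rw [this, map_add, map_add]
    ring
  rw [htarget]
  refine v.map_le_add ?_ ?_
  · exact hMid H f hGoodH hGoodf n
  · exact key s n
end

section
/- Let r ≥ 0 be a real number. Let H = Σ_{i≥0} h_i T^i ∈ C[[T]] satisfy v(h_i) + i·r ≥ 0 for all i ≥ 0, and let f = Σ_{i≥1} f_i T^i ∈ T·C[[T]] be such that β := v_r(f) satisfies 0 ≤ β < 1/(p−1). Then v_r((H+f)^p − H^p) = p·β, and for every index n ≥ 1 not divisible by p, the n-th coefficient c_n of (H+f)^p − H^p satisfies v(c_n) + n·r ≥ 1 + β > p·β. In particular, the Gauss valuation p·β of (H+f)^p − H^p can only be attained by coefficients whose degree is divisible by p. -/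
open PowerSeries Finset

private lemma wsle {A c : ℝ} {x : WithTop ℝ} :
    ((A : ℝ) : WithTop ℝ) ≤ x + ((c : ℝ) : WithTop ℝ) ↔ (((A - c : ℝ)) : WithTop ℝ) ≤ x := by
  induction x using WithTop.recTopCoe with
  | top => simp only [top_add]; exact ⟨fun _ => le_top, fun _ => le_top⟩
  | coe a =>
    rw [← WithTop.coe_add, WithTop.coe_le_coe, WithTop.coe_le_coe]
    constructor <;> intro <;> linarith

private lemma wslt {A c : ℝ} {x : WithTop ℝ} :
    x + ((c : ℝ) : WithTop ℝ) < ((A : ℝ) : WithTop ℝ) ↔ x < (((A - c : ℝ)) : WithTop ℝ) := by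
  induction x using WithTop.recTopCoe with
  | top =>
    simp only [top_add]
    exact ⟨fun h => absurd h (not_lt.mpr le_top), fun h => absurd h (not_lt.mpr le_top)⟩
  | coe a =>
    rw [← WithTop.coe_add, WithTop.coe_lt_coe, WithTop.coe_lt_coe]
    constructor <;> intro <;> linarith

private lemma wslt' {A c : ℝ} {x : WithTop ℝ} :
    ((A : ℝ) : WithTop ℝ) < x + ((c : ℝ) : WithTop ℝ) ↔ (((A - c : ℝ)) : WithTop ℝ) < x := by
  induction x using WithTop.recTopCoe with
  | top =>
    simp only [top_add]
    exact ⟨fun _ => WithTop.coe_lt_top _, fun _ => WithTop.coe_lt_top _⟩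
  | coe a =>
    rw [← WithTop.coe_add, WithTop.coe_lt_coe, WithTop.coe_lt_coe]
    constructor <;> intro <;> linarith

private lemma wseq {A c : ℝ} {x : WithTop ℝ} :
    x + ((c : ℝ) : WithTop ℝ) = ((A : ℝ) : WithTop ℝ) ↔ x = (((A - c : ℝ)) : WithTop ℝ) := by
  induction x using WithTop.recTopCoe with
  | top =>
    simp only [top_add]
    constructor <;> intro h
    · exact absurd h (WithTop.top_ne_coe)
    · exact absurd h (WithTop.top_ne_coe)
  | coe a =>
    rw [← WithTop.coe_add, WithTop.coe_eq_coe, WithTop.coe_eq_coe]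
    constructor <;> intro <;> linarith

private lemma wadd_le_add {a b : ℝ} {x y : WithTop ℝ} (hx : (a : WithTop ℝ) ≤ x)
    (hy : (b : WithTop ℝ) ≤ y) : (((a + b : ℝ)) : WithTop ℝ) ≤ x + y := by
  rw [WithTop.coe_add]; exact add_le_add hx hy

private lemma wadd_lt_le {a b : ℝ} {x y : WithTop ℝ} (hx : (a : WithTop ℝ) < x)
    (hy : (b : WithTop ℝ) ≤ y) : (((a + b : ℝ)) : WithTop ℝ) < x + y := by
  rw [WithTop.coe_add]; exact WithTop.add_lt_add_of_lt_of_le WithTop.coe_ne_top hx hy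

private lemma wadd_le_lt {a b : ℝ} {x y : WithTop ℝ} (hx : (a : WithTop ℝ) ≤ x)
    (hy : (b : WithTop ℝ) < y) : (((a + b : ℝ)) : WithTop ℝ) < x + y := by
  rw [WithTop.coe_add]; exact WithTop.add_lt_add_of_le_of_lt WithTop.coe_ne_top hx hy

private lemma aux_vnat_s7 {C : Type} [Field C] (v : AddValuation C (WithTop ℝ)) (n : ℕ) :
    (0 : WithTop ℝ) ≤ v (n : C) := by
  induction n with
  | zero => rw [Nat.cast_zero, v.map_zero]; exact le_top
  | succ n ih =>
    have h : ((n + 1 : ℕ) : C) = (n : C) + 1 := by push_cast; ring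
    rw [h]
    exact v.map_le_add ih (le_of_eq v.map_one.symm)

private lemma aux_vint {C : Type} [Field C] (v : AddValuation C (WithTop ℝ)) (a : ℤ) :
    (0 : WithTop ℝ) ≤ v ((a : ℤ) : C) := by
  rcases Int.natAbs_eq a with h | h <;> rw [h]
  · rw [Int.cast_natCast]
    exact aux_vnat_s7 v _
  · rw [Int.cast_neg, Int.cast_natCast, v.map_neg]
    exact aux_vnat_s7 v _

private lemma aux_vcop {C : Type} [Field C] (v : AddValuation C (WithTop ℝ)) {p n : ℕ}
    (hp : p.Prime) (hvp : v (p : C) = 1) (hn : ¬ p ∣ n) : v (n : C) = 0 := by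
  have hco : Nat.Coprime p n := (Nat.Prime.coprime_iff_not_dvd hp).mpr hn
  have hb : (1 : ℤ) = (p : ℤ) * Int.gcdA p n + (n : ℤ) * Int.gcdB p n := by
    have h := Int.gcd_eq_gcd_ab (p : ℤ) (n : ℤ)
    rwa [Int.gcd_natCast_natCast, hco.gcd_eq_one, Nat.cast_one] at h
  have hbc : (1 : C) = (p : C) * ((Int.gcdA p n : ℤ) : C) + (n : C) * ((Int.gcdB p n : ℤ) : C) := by
    have h := congrArg (fun z : ℤ => (z : C)) hb
    push_cast at h
    exact h
  have h0 : min (v ((p : C) * ((Int.gcdA p n : ℤ) : C))) (v ((n : C) * ((Int.gcdB p n : ℤ) : C)))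
      ≤ (0 : WithTop ℝ) := by
    have h := v.map_add ((p : C) * ((Int.gcdA p n : ℤ) : C)) ((n : C) * ((Int.gcdB p n : ℤ) : C))
    rw [← hbc, v.map_one] at h
    exact h
  have h1 : (0 : WithTop ℝ) < v ((p : C) * ((Int.gcdA p n : ℤ) : C)) := by
    rw [v.map_mul, hvp]
    calc (0 : WithTop ℝ) < 1 := by exact_mod_cast zero_lt_one
    _ ≤ 1 + v ((Int.gcdA p n : ℤ) : C) := le_add_of_nonneg_right (aux_vint v _)
  have h2 : v ((n : C) * ((Int.gcdB p n : ℤ) : C)) ≤ 0 := by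
    rcases min_le_iff.mp h0 with h | h
    · exact absurd (lt_of_lt_of_le h1 h) (lt_irrefl _)
    · exact h
  have h3 : v (n : C) ≤ v ((n : C) * ((Int.gcdB p n : ℤ) : C)) := by
    rw [v.map_mul]
    exact le_add_of_nonneg_right (aux_vint v _)
  exact le_antisymm (h3.trans h2) (aux_vnat_s7 v n)

private lemma aux_mul {C : Type} [Field C] (v : AddValuation C (WithTop ℝ)) (r : ℝ)
    {g h : PowerSeries C} {A B : ℝ}
    (hg : ∀ i : ℕ, (((A - (i : ℝ) * r : ℝ)) : WithTop ℝ) ≤ v (coeff (R := C) i g))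
    (hh : ∀ i : ℕ, (((B - (i : ℝ) * r : ℝ)) : WithTop ℝ) ≤ v (coeff (R := C) i h)) (n : ℕ) :
    (((A + B - (n : ℝ) * r : ℝ)) : WithTop ℝ) ≤ v (coeff (R := C) n (g * h)) := by
  rw [PowerSeries.coeff_mul]
  refine v.map_le_sum fun ij hij => ?_
  rw [Finset.HasAntidiagonal.mem_antidiagonal] at hij
  rw [v.map_mul]
  have hc : (ij.1 : ℝ) + (ij.2 : ℝ) = (n : ℝ) := by exact_mod_cast congrArg (Nat.cast : ℕ → ℝ) hij
  have e : (A + B - (n : ℝ) * r : ℝ) = (A - (ij.1 : ℝ) * r) + (B - (ij.2 : ℝ) * r) := by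
    linear_combination r * hc
  rw [e]
  exact wadd_le_add (hg _) (hh _)

private lemma aux_pow {C : Type} [Field C] (v : AddValuation C (WithTop ℝ)) (r : ℝ)
    {g : PowerSeries C} {A : ℝ}
    (hg : ∀ i : ℕ, (((A - (i : ℝ) * r : ℝ)) : WithTop ℝ) ≤ v (coeff (R := C) i g)) :
    ∀ (k : ℕ) (n : ℕ), ((((k : ℝ) * A - (n : ℝ) * r : ℝ)) : WithTop ℝ) ≤ v (coeff (R := C) n (g ^ k)) := by
  intro k
  induction k with
  | zero =>
    intro n
    rw [pow_zero, PowerSeries.coeff_one]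
    by_cases hn : n = 0
    · subst hn
      rw [if_pos rfl, v.map_one]
      exact_mod_cast le_of_eq (by norm_num)
    · rw [if_neg hn, v.map_zero]
      exact le_top
  | succ k ih =>
    intro n
    rw [pow_succ]
    have e : ((k + 1 : ℕ) : ℝ) * A - (n : ℝ) * r = ((k : ℝ) * A + A) - (n : ℝ) * r := by
      push_cast; ring
    rw [e]
    exact aux_mul v r ih hg n

private lemma aux_powex {C : Type} [Field C] (v : AddValuation C (WithTop ℝ)) (r' : ℝ)
    (g : PowerSeries C) (μ : ℝ) (i₀ : ℕ)
    (hlb : ∀ i : ℕ, (((μ - (i : ℝ) * r' : ℝ)) : WithTop ℝ) ≤ v (coeff (R := C) i g))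
    (hex : v (coeff (R := C) i₀ g) = ((μ - (i₀ : ℝ) * r' : ℝ) : WithTop ℝ))
    (hlt : ∀ j : ℕ, j < i₀ → (((μ - (j : ℝ) * r' : ℝ)) : WithTop ℝ) < v (coeff (R := C) j g)) :
    ∀ k : ℕ, 1 ≤ k →
      (v (coeff (R := C) (k * i₀) (g ^ k)) =
        (((k : ℝ) * μ - ((k * i₀ : ℕ) : ℝ) * r' : ℝ) : WithTop ℝ)) ∧
      (∀ n : ℕ, n < k * i₀ →
        ((((k : ℝ) * μ - (n : ℝ) * r' : ℝ)) : WithTop ℝ) < v (coeff (R := C) n (g ^ k))) := by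
  intro k hk
  induction k, hk using Nat.le_induction with
  | base =>
    constructor
    · rw [pow_one, one_mul, hex]
      norm_num
    · intro n hn
      rw [pow_one]
      have h := hlt n (by simpa using hn)
      have e : ((1 : ℕ) : ℝ) * μ - (n : ℝ) * r' = μ - (n : ℝ) * r' := by push_cast; ring
      rw [e]
      exact h
  | succ k hk ih =>
    have hglb := aux_pow v r' hlb k
    constructor
    · -- exact value at (k+1)*i₀
      rw [pow_succ, PowerSeries.coeff_mul]
      set F : ℕ × ℕ → C := fun ij => coeff (R := C) ij.1 (g ^ k) * coeff (R := C) ij.2 g with hF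
      have hmem : ((k * i₀, i₀) : ℕ × ℕ) ∈ antidiagonal ((k + 1) * i₀) := by
        rw [Finset.HasAntidiagonal.mem_antidiagonal]
        ring
      have hvmain : v (F (k * i₀, i₀)) =
          ((((k + 1 : ℕ) : ℝ) * μ - (((k + 1) * i₀ : ℕ) : ℝ) * r' : ℝ) : WithTop ℝ) := by
        rw [hF]
        simp only
        rw [v.map_mul, ih.1, hex, ← WithTop.coe_add]
        congr 1
        push_cast
        ring
      have hother : ∀ ij ∈ (antidiagonal ((k + 1) * i₀)).erase (k * i₀, i₀),
          v (F (k * i₀, i₀)) < v (F ij) := by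
        intro ij hij
        obtain ⟨hne, hmem'⟩ := Finset.mem_erase.mp hij
        rw [Finset.HasAntidiagonal.mem_antidiagonal] at hmem'
        have hc : (ij.1 : ℝ) + (ij.2 : ℝ) = ((k + 1 : ℕ) : ℝ) * (i₀ : ℝ) := by
          push_cast
          exact_mod_cast congrArg (Nat.cast : ℕ → ℝ) hmem'
        rw [hvmain, hF]
        simp only
        rw [v.map_mul]
        rcases lt_trichotomy ij.2 i₀ with h | h | h
        · have h1 := hglb ij.1
          have h2 := hlt ij.2 h
          have h3 := wadd_le_lt h1 h2
          have e : ((k : ℝ) * μ - (ij.1 : ℝ) * r') + (μ - (ij.2 : ℝ) * r')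
              = ((k + 1 : ℕ) : ℝ) * μ - (((k + 1) * i₀ : ℕ) : ℝ) * r' := by
            push_cast at hc ⊢
            linear_combination (-r') * hc
          rw [e] at h3
          exact h3
        · exfalso
          apply hne
          have : ij.1 = k * i₀ := by
            have h2 := hmem'
            rw [h] at h2
            have h3 : (k + 1) * i₀ = k * i₀ + i₀ := by ring
            omega
          exact Prod.ext this h
        · have hi : ij.1 < k * i₀ := by
            have h3 : (k + 1) * i₀ = k * i₀ + i₀ := by ring
            omega
          have h1 := ih.2 ij.1 hi
          have h2 := hlb ij.2
          have h3 := wadd_lt_le h1 h2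
          have e : ((k : ℝ) * μ - (ij.1 : ℝ) * r') + (μ - (ij.2 : ℝ) * r')
              = ((k + 1 : ℕ) : ℝ) * μ - (((k + 1) * i₀ : ℕ) : ℝ) * r' := by
            push_cast at hc ⊢
            linear_combination (-r') * hc
          rw [e] at h3
          exact h3
      rw [← Finset.add_sum_erase _ F hmem]
      have hlt2 : v (F (k * i₀, i₀)) <
          v (∑ ij ∈ (antidiagonal ((k + 1) * i₀)).erase (k * i₀, i₀), F ij) := by
        refine v.map_lt_sum ?_ hother
        rw [hvmain]
        exact WithTop.coe_ne_top
      rw [v.map_add_eq_of_lt_left hlt2]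
      exact hvmain
    · intro n hn
      rw [pow_succ, PowerSeries.coeff_mul]
      refine v.map_lt_sum' (WithTop.coe_lt_top _) fun ij hij => ?_
      rw [Finset.HasAntidiagonal.mem_antidiagonal] at hij
      have hc : (ij.1 : ℝ) + (ij.2 : ℝ) = (n : ℝ) := by
        exact_mod_cast congrArg (Nat.cast : ℕ → ℝ) hij
      rw [v.map_mul]
      have hor : ij.1 < k * i₀ ∨ ij.2 < i₀ := by
        have h3 : (k + 1) * i₀ = k * i₀ + i₀ := by ring
        omega
      have e : ((k : ℝ) * μ - (ij.1 : ℝ) * r') + (μ - (ij.2 : ℝ) * r')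
          = ((k + 1 : ℕ) : ℝ) * μ - (n : ℝ) * r' := by
        push_cast at hc ⊢
        linear_combination (-r') * hc
      rcases hor with h | h
      · have h3 := wadd_lt_le (ih.2 ij.1 h) (hlb ij.2)
        rw [e] at h3
        exact h3
      · have h3 := wadd_le_lt (hglb ij.1) (hlt ij.2 h)
        rw [e] at h3
        exact h3

set_option maxHeartbeats 1000000

/-- Let `r ≥ 0`.  Let `H = Σ_{i ≥ 0} h_i T^i ∈ C[[T]]` satisfy `v (h_i) + i * r ≥ 0` for all
`i`, and let `f = Σ_{i ≥ 1} f_i T^i ∈ T·C[[T]]` be such that `β := v_r (f)` (the Gauss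
valuation `inf_i (v (f_i) + i * r)`, expressed below as a lower bound together with an
approximation property) satisfies `0 ≤ β < 1 / (p - 1)`.  Then
`v_r ((H + f)^p - H^p) = p * β` (lower bound plus approximation), and for every index `n ≥ 1`
not divisible by `p`, the `n`-th coefficient `c_n` of `(H + f)^p - H^p` satisfies
`v (c_n) + n * r ≥ 1 + β > p * β`.  In particular the Gauss valuation `p * β` can only be
attained by coefficients whose degree is divisible by `p`. -/
theorem stmt7 (p : ℕ) (hp : p.Prime)
    (C : Type) [Field C] [IsAlgClosed C] [CharZero C]
    (v : AddValuation C (WithTop ℝ)) (hvp : v (p : C) = 1)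
    (r : ℝ) (hr : 0 ≤ r)
    (H : PowerSeries C)
    (hH : ∀ i : ℕ, (0 : WithTop ℝ) ≤ v (PowerSeries.coeff (R := C) i H) + (((i : ℝ) * r : ℝ) : WithTop ℝ))
    (f : PowerSeries C) (hf0 : PowerSeries.coeff (R := C) 0 f = 0)
    (β : ℝ) (hβ0 : 0 ≤ β) (hβ1 : β < 1 / ((p : ℝ) - 1))
    (hβlb : ∀ i : ℕ, ((β : ℝ) : WithTop ℝ) ≤
      v (PowerSeries.coeff (R := C) i f) + (((i : ℝ) * r : ℝ) : WithTop ℝ))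
    (hβglb : ∀ ε : ℝ, 0 < ε → ∃ i : ℕ,
      v (PowerSeries.coeff (R := C) i f) + (((i : ℝ) * r : ℝ) : WithTop ℝ) < ((β + ε : ℝ) : WithTop ℝ)) :
    (∀ n : ℕ, (((p : ℝ) * β : ℝ) : WithTop ℝ) ≤
        v (PowerSeries.coeff (R := C) n ((H + f) ^ p - H ^ p)) + (((n : ℝ) * r : ℝ) : WithTop ℝ)) ∧
      (∀ ε : ℝ, 0 < ε → ∃ n : ℕ,
        v (PowerSeries.coeff (R := C) n ((H + f) ^ p - H ^ p)) + (((n : ℝ) * r : ℝ) : WithTop ℝ) <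
          (((p : ℝ) * β + ε : ℝ) : WithTop ℝ)) ∧
      (∀ n : ℕ, 1 ≤ n → ¬ p ∣ n →
        ((1 + β : ℝ) : WithTop ℝ) ≤
          v (PowerSeries.coeff (R := C) n ((H + f) ^ p - H ^ p)) + (((n : ℝ) * r : ℝ) : WithTop ℝ)) ∧
      (p : ℝ) * β < 1 + β := by
  classical
  have hppos : 0 < p := hp.pos
  have hpR : (2 : ℝ) ≤ (p : ℝ) := by exact_mod_cast hp.two_le
  have part4 : (p : ℝ) * β < 1 + β := by
    have h1 : 0 < (p : ℝ) - 1 := by linarith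
    have h2 : β * ((p : ℝ) - 1) < (1 / ((p : ℝ) - 1)) * ((p : ℝ) - 1) :=
      mul_lt_mul_of_pos_right hβ1 h1
    rw [one_div_mul_cancel (ne_of_gt h1)] at h2
    nlinarith
  have hβ' : ∀ i : ℕ, (((β - (i : ℝ) * r : ℝ)) : WithTop ℝ) ≤ v (coeff (R := C) i f) :=
    fun i => wsle.mp (hβlb i)
  have hH' : ∀ i : ℕ, (((0 - (i : ℝ) * r : ℝ)) : WithTop ℝ) ≤ v (coeff (R := C) i H) := by
    intro i
    refine wsle.mp ?_
    rw [WithTop.coe_zero]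
    exact hH i
  set rest : PowerSeries C :=
    ∑ k ∈ Finset.Ioo 0 p, H ^ k * f ^ (p - k) * (p.choose k : PowerSeries C) with hrestdef
  have hsplit : (H + f) ^ p - H ^ p = f ^ p + rest := by
    have hbin := add_pow H f p
    have hrange : Finset.range (p + 1) = insert p (insert 0 (Finset.Ioo 0 p)) := by
      ext x
      simp only [Finset.mem_range, Finset.mem_insert, Finset.mem_Ioo]
      omega
    have hnp : p ∉ insert 0 (Finset.Ioo 0 p) := by
      simp only [Finset.mem_insert, Finset.mem_Ioo]
      omega
    have hn0 : (0 : ℕ) ∉ Finset.Ioo 0 p := by simp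
    rw [hbin, hrange, Finset.sum_insert hnp, Finset.sum_insert hn0]
    rw [Nat.sub_self, pow_zero, mul_one, Nat.choose_self, Nat.cast_one, mul_one]
    rw [pow_zero, one_mul, Nat.choose_zero_right, Nat.cast_one, mul_one, Nat.sub_zero]
    ring
  have hrest : ∀ n : ℕ, (((1 + β - (n : ℝ) * r : ℝ)) : WithTop ℝ) ≤ v (coeff (R := C) n rest) := by
    intro n
    rw [hrestdef, map_sum]
    refine v.map_le_sum fun k hk => ?_
    rw [Finset.mem_Ioo] at hk
    rw [show ((p.choose k : ℕ) : PowerSeries C) = PowerSeries.C (R := C) ((p.choose k : ℕ) : C) from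
      (map_natCast (PowerSeries.C (R := C)) _).symm]
    rw [PowerSeries.coeff_mul_C, v.map_mul]
    have h1 := aux_mul v r (aux_pow v r hH' k) (aux_pow v r hβ' (p - k)) n
    have h2 : ((1 : ℝ) : WithTop ℝ) ≤ v ((p.choose k : ℕ) : C) := by
      obtain ⟨t, ht⟩ := hp.dvd_choose_self (Nat.pos_iff_ne_zero.mp hk.1) hk.2
      rw [ht, Nat.cast_mul, v.map_mul, hvp, WithTop.coe_one]
      exact le_add_of_nonneg_right (aux_vnat_s7 v t)
    have h3 := wadd_le_add h1 h2
    refine le_trans ?_ h3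
    rw [WithTop.coe_le_coe]
    have hpk : (1 : ℝ) ≤ ((p - k : ℕ) : ℝ) := by
      have h4 : 1 ≤ p - k := by omega
      exact_mod_cast h4
    nlinarith [hβ0, hpk, mul_le_mul_of_nonneg_right hpk hβ0]
  have hfP := aux_pow v r hβ' p
  have hfpnd : ∀ n : ℕ, 1 ≤ n → ¬ p ∣ n →
      (((1 + (p : ℝ) * β - (n : ℝ) * r : ℝ)) : WithTop ℝ) ≤ v (coeff (R := C) n (f ^ p)) := by
    intro n hn hpn
    have hD : (PowerSeries.derivative C) (f ^ p)
        = p • (f ^ (p - 1) • (PowerSeries.derivative C) f) :=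
      Derivation.leibniz_pow _ _ p
    have hco := congrArg (coeff (R := C) (n - 1)) hD
    rw [PowerSeries.coeff_derivative] at hco
    rw [smul_eq_mul, map_nsmul, nsmul_eq_mul] at hco
    have hn1 : n - 1 + 1 = n := Nat.succ_pred_eq_of_pos hn
    rw [hn1] at hco
    have hcast : ((n - 1 : ℕ) : C) + 1 = (n : C) := by
      have h5 := congrArg (Nat.cast : ℕ → C) hn1
      push_cast at h5
      exact h5
    rw [hcast] at hco
    have hv := congrArg v hco
    rw [v.map_mul, v.map_mul, aux_vcop v hp hvp hpn, add_zero, hvp] at hv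
    have hDf : ∀ i : ℕ, (((β - r - (i : ℝ) * r : ℝ)) : WithTop ℝ) ≤
        v (coeff (R := C) i ((PowerSeries.derivative C) f)) := by
      intro i
      rw [PowerSeries.coeff_derivative, v.map_mul]
      have h1 := hβ' (i + 1)
      have h2 : ((0 : ℝ) : WithTop ℝ) ≤ v (((i : ℕ) : C) + 1) := by
        rw [show ((i : ℕ) : C) + 1 = ((i + 1 : ℕ) : C) from by push_cast; ring, WithTop.coe_zero]
        exact aux_vnat_s7 v _
      have h3 := wadd_le_add h1 h2
      refine le_trans (le_of_eq ?_) h3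
      rw [WithTop.coe_eq_coe]
      push_cast
      ring
    have hX := aux_mul v r (aux_pow v r hβ' (p - 1)) hDf (n - 1)
    rw [hv]
    have e1 : ((1 + (p : ℝ) * β - (n : ℝ) * r : ℝ) : WithTop ℝ)
        = ((1 : ℝ) : WithTop ℝ) + (((p : ℝ) * β - (n : ℝ) * r : ℝ) : WithTop ℝ) := by
      rw [← WithTop.coe_add]
      congr 1
      ring
    rw [e1, WithTop.coe_one]
    refine add_le_add_right (le_trans ?_ hX) _
    rw [WithTop.coe_le_coe]
    have hc1 : ((p - 1 : ℕ) : ℝ) = (p : ℝ) - 1 := by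
      rw [Nat.cast_sub hp.one_lt.le, Nat.cast_one]
    have hc2 : ((n - 1 : ℕ) : ℝ) = (n : ℝ) - 1 := by
      rw [Nat.cast_sub hn, Nat.cast_one]
    rw [hc1, hc2]
    nlinarith [hr]
  refine ⟨?_, ?_, ?_, part4⟩
  · intro n
    rw [hsplit]
    refine wsle.mpr ?_
    rw [map_add]
    refine v.map_le_add (hfP n) (le_trans ?_ (hrest n))
    rw [WithTop.coe_le_coe]
    linarith [part4]
  · intro ε hε
    set δ : ℝ := min ε (1 + β - (p : ℝ) * β) with hδdef
    have hδpos : 0 < δ := lt_min hε (by linarith [part4])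
    have hδε : δ ≤ ε := min_le_left _ _
    have hδβ : δ ≤ 1 + β - (p : ℝ) * β := min_le_right _ _
    set δ₂ : ℝ := δ / (8 * ((p : ℝ) + 1)) with hδ₂def
    have hδ₂pos : 0 < δ₂ := by
      apply div_pos hδpos
      positivity
    obtain ⟨i₁, hi₁⟩ := hβglb δ₂ hδ₂pos
    have hi₁' : v (coeff (R := C) i₁ f) < ((β + δ₂ - (i₁ : ℝ) * r : ℝ) : WithTop ℝ) := wslt.mp hi₁
    set η : ℝ := δ₂ / ((i₁ : ℝ) + 1) with hηdef
    have hi₁0 : (0 : ℝ) ≤ (i₁ : ℝ) := Nat.cast_nonneg _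
    have hi₁1 : (0 : ℝ) < (i₁ : ℝ) + 1 := by linarith
    have hηpos : 0 < η := div_pos hδ₂pos hi₁1
    have hηδ : η * ((i₁ : ℝ) + 1) = δ₂ := by
      rw [hηdef]
      field_simp
    set r' : ℝ := r + η with hr'def
    have hrr' : r ≤ r' := by linarith
    set W : ℕ → WithTop ℝ := fun i => v (coeff (R := C) i f) + (((i : ℝ) * r' : ℝ) : WithTop ℝ) with hWdef
    have hWlb : ∀ j : ℕ, ((β + (j : ℝ) * η : ℝ) : WithTop ℝ) ≤ W j := by
      intro j
      have h1 : ((β - (j : ℝ) * r : ℝ) : WithTop ℝ) ≤ v (coeff (R := C) j f) := hβ' j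
      have h2 := add_le_add_left h1 (((j : ℝ) * r' : ℝ) : WithTop ℝ)
      refine le_trans (le_of_eq ?_) h2
      rw [← WithTop.coe_add, WithTop.coe_eq_coe, hr'def]
      ring
    set N : ℕ := 2 * i₁ + 3 with hNdef
    have hne : (Finset.range N).Nonempty := ⟨0, Finset.mem_range.mpr (by omega)⟩
    set m : WithTop ℝ := (Finset.range N).inf' hne W with hmdef
    have hmW : ∀ i ∈ Finset.range N, m ≤ W i := fun i hi => Finset.inf'_le W hi
    have hWi₁lt : W i₁ < ((β + 2 * δ₂ : ℝ) : WithTop ℝ) := by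
      simp only [hWdef]
      refine wslt.mpr (lt_of_lt_of_le hi₁' ?_)
      rw [WithTop.coe_le_coe, hr'def]
      have h5 : (i₁ : ℝ) * η ≤ δ₂ := by
        rw [hηdef, mul_div_assoc']
        rw [div_le_iff₀ hi₁1]
        nlinarith
      nlinarith
    have hmlt : m < ((β + 2 * δ₂ : ℝ) : WithTop ℝ) :=
      lt_of_le_of_lt (hmW i₁ (Finset.mem_range.mpr (by omega))) hWi₁lt
    have hglobal : ∀ j : ℕ, m ≤ W j := by
      intro j
      by_cases hj : j < N
      · exact hmW j (Finset.mem_range.mpr hj)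
      · refine le_trans (le_of_lt hmlt) (le_trans ?_ (hWlb j))
        rw [WithTop.coe_le_coe]
        have hjN : (N : ℝ) ≤ (j : ℝ) := by exact_mod_cast Nat.le_of_not_lt hj
        have hNval : ((N : ℕ) : ℝ) = 2 * (i₁ : ℝ) + 3 := by
          rw [hNdef]; push_cast; ring
        nlinarith [hηpos, hηδ]
    obtain ⟨i₀', hi₀'mem, hi₀'⟩ := Finset.exists_mem_eq_inf' hne W
    have hexists : ∃ i : ℕ, W i = m := ⟨i₀', hi₀'.symm⟩
    set i₀ : ℕ := Nat.find hexists with hi₀def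
    have hWi₀ : W i₀ = m := Nat.find_spec hexists
    have hlti₀ : ∀ j, j < i₀ → m < W j := fun j hj =>
      lt_of_le_of_ne (hglobal j) (fun h => (Nat.find_min hexists hj) h.symm)
    have hmne : m ≠ ⊤ := ne_top_of_lt hmlt
    obtain ⟨μ, hμ⟩ : ∃ μ : ℝ, m = ((μ : ℝ) : WithTop ℝ) := by
      obtain ⟨a, ha⟩ := WithTop.ne_top_iff_exists.mp hmne
      exact ⟨a, ha.symm⟩
    have hμβ : β ≤ μ := by
      have h1 : ((β + (i₀ : ℝ) * η : ℝ) : WithTop ℝ) ≤ m := hWi₀ ▸ hWlb i₀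
      rw [hμ, WithTop.coe_le_coe] at h1
      nlinarith [hηpos, Nat.cast_nonneg (α := ℝ) i₀]
    have hμub : μ < β + 2 * δ₂ := by
      rw [hμ, WithTop.coe_lt_coe] at hmlt
      exact hmlt
    have hex : v (coeff (R := C) i₀ f) = ((μ - (i₀ : ℝ) * r' : ℝ) : WithTop ℝ) := by
      refine wseq.mp ?_
      rw [← hμ]
      exact hWi₀
    have hltI : ∀ j : ℕ, j < i₀ →
        (((μ - (j : ℝ) * r' : ℝ)) : WithTop ℝ) < v (coeff (R := C) j f) := by
      intro j hj
      refine wslt'.mp ?_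
      rw [← hμ]
      exact hlti₀ j hj
    have hlbI : ∀ i : ℕ, (((μ - (i : ℝ) * r' : ℝ)) : WithTop ℝ) ≤ v (coeff (R := C) i f) := by
      intro i
      refine wsle.mp ?_
      rw [← hμ]
      exact hglobal i
    obtain ⟨hkex, _⟩ := aux_powex v r' f μ i₀ hlbI hex hltI p hppos
    clear_value rest δ δ₂ η r' W N m i₀
    refine ⟨p * i₀, ?_⟩
    rw [hsplit, map_add]
    have hAr : v (coeff (R := C) (p * i₀) (f ^ p)) <
        (((p : ℝ) * β + δ / 2 - ((p * i₀ : ℕ) : ℝ) * r : ℝ) : WithTop ℝ) := by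
      rw [hkex, WithTop.coe_lt_coe]
      have h6 : ((p * i₀ : ℕ) : ℝ) * r ≤ ((p * i₀ : ℕ) : ℝ) * r' :=
        mul_le_mul_of_nonneg_left hrr' (Nat.cast_nonneg _)
      have h7 : (p : ℝ) * μ < (p : ℝ) * β + 2 * (p : ℝ) * δ₂ := by nlinarith [hμub]
      have h8 : 2 * (p : ℝ) * δ₂ < δ / 2 := by
        have key : δ₂ * (8 * ((p : ℝ) + 1)) = δ := by
          rw [hδ₂def]
          field_simp
        nlinarith [key, hδ₂pos, mul_nonneg (Nat.cast_nonneg (α := ℝ) p) hδ₂pos.le]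
      linarith
    have hB := hrest (p * i₀)
    have hAB : v (coeff (R := C) (p * i₀) (f ^ p)) < v (coeff (R := C) (p * i₀) rest) := by
      refine lt_of_lt_of_le (lt_of_lt_of_le hAr ?_) hB
      rw [WithTop.coe_le_coe]
      linarith
    rw [v.map_add_eq_of_lt_left hAB]
    refine wslt.mpr (lt_of_lt_of_le hAr ?_)
    rw [WithTop.coe_le_coe]
    linarith
  · intro n hn hpn
    rw [hsplit]
    refine wsle.mpr ?_
    rw [map_add]
    refine v.map_le_add (le_trans ?_ (hfpnd n hn hpn)) (le_trans ?_ (hrest n))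
    · rw [WithTop.coe_le_coe]
      nlinarith [hβ0, mul_le_mul_of_nonneg_right hpR hβ0]
    · rw [WithTop.coe_le_coe]
end
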